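/- arXiv:2206.12024 — 5 statements merged into one kernel-verified Lean document; each statement's English description precedes it below -/
import Mathlib

section
/- Let 0 < p ≤ 1 and q > 1 and let μ be a positive Borel measure on [0,1) which is a 1/p-Carleson measure. If there is C > 0 such that |∫_{[0,1)} conj(f(t)) (g(t) + t g'(t)) dμ(t)| ≤ C ||f||_{H^p} ||g||_{H^{q'}} for all f ∈ H^p and g ∈ H^{q'} (where 1/q + 1/q' = 1), then μ is a (1/p + 1/q' + 1)-Carleson measure. -/
open MeasureTheory Metric Set Complex

/-- The integral mean `M_p(r,f)`. -/
noncomputable def Mp (p : ℝ) (f : ℂ → ℂ) (r : ℝ) : ℝ :=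
  ((1 / (2 * Real.pi)) * ∫ θ in (0:ℝ)..(2 * Real.pi),
      ‖f (r * Complex.exp (θ * Complex.I))‖ ^ p) ^ (1 / p)

/-- The Hardy space norm `‖f‖_{H^p} = sup_{0<r<1} M_p(r,f)`. -/
noncomputable def hardyNorm (p : ℝ) (f : ℂ → ℂ) : ℝ :=
  ⨆ r : Set.Ioo (0:ℝ) 1, Mp p f (r : ℝ)

/-- Membership in the Hardy space `H^p` on the unit disc. -/
def MemHp (p : ℝ) (f : ℂ → ℂ) : Prop :=
  AnalyticOnNhd ℂ f (Metric.ball 0 1) ∧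
    BddAbove (Set.range fun r : Set.Ioo (0:ℝ) 1 => Mp p f (r : ℝ))

/-- `μ` is an `s`-Carleson measure on `[0,1)`. -/
def IsCarleson (s : ℝ) (μ : Measure ℝ) : Prop :=
  ∃ C > 0, ∀ t ∈ Set.Ico (0:ℝ) 1, μ (Set.Ico t 1) ≤ ENNReal.ofReal (C * (1 - t) ^ s)

/-- `μ` is a vanishing `s`-Carleson measure on `[0,1)`. -/
def IsVanishingCarleson (s : ℝ) (μ : Measure ℝ) : Prop :=
  ∀ ε > 0, ∃ δ ∈ Set.Ico (0:ℝ) 1, ∀ t ∈ Set.Ico δ 1,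
    μ (Set.Ico t 1) ≤ ENNReal.ofReal (ε * (1 - t) ^ s)

/-- The moments `μ_n = ∫_{[0,1)} t^n dμ(t)`. -/
noncomputable def moment (μ : Measure ℝ) (n : ℕ) : ℝ :=
  ∫ t in Set.Ico (0:ℝ) 1, t ^ n ∂μ


lemma poisson (a : ℝ) (ha : 0 ≤ a) (ha1 : a < 1) :
    ∫ θ in (0:ℝ)..(2*Real.pi), (Complex.normSq (1 - a * Complex.exp (θ * Complex.I)))⁻¹
      = 2 * Real.pi / (1 - a^2) := by
  set g : ℂ → ℂ := fun w => (1 - a*w)⁻¹ with hg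
  have hne : ∀ w : ℂ, ‖w‖ ≤ 1 → (1 : ℂ) - a*w ≠ 0 := by
    intro w hw h
    have : ‖(1:ℂ)‖ = ‖(a:ℂ)*w‖ := by rw [sub_eq_zero] at h; rw [h]
    simp only [norm_one, norm_mul, Complex.norm_real, Real.norm_eq_abs,
      _root_.abs_of_nonneg ha] at this
    nlinarith [norm_nonneg w]
  have hdc : DiffContOnCl ℂ g (ball (0:ℂ) 1) := by
    constructor
    · apply DifferentiableOn.inv
      · fun_prop
      · intro w hw; exact hne w (le_of_lt (by simpa using hw))
    · rw [closure_ball (0:ℂ) one_ne_zero]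
      apply ContinuousOn.inv₀
      · fun_prop
      · intro w hw; exact hne w (by simpa using hw)
  have hmem : (a:ℂ) ∈ ball (0:ℂ) 1 := by
    simp only [mem_ball, dist_zero_right, Complex.norm_real, Real.norm_eq_abs]
    rwa [_root_.abs_of_nonneg ha]
  have key := hdc.circleIntegral_sub_inv_smul hmem
  rw [circleIntegral] at key
  simp only [deriv_circleMap, circleMap, ofReal_one, one_mul, zero_add, smul_eq_mul] at key
  have hpt : ∀ θ : ℝ, Complex.exp (θ * I) * I * ((Complex.exp (θ * I) - a)⁻¹ * g (Complex.exp (θ * I)))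
      = I * (((Complex.normSq (1 - a * Complex.exp (θ * Complex.I)))⁻¹ : ℝ) : ℂ) := by
    intro θ
    have hexp : Complex.exp (θ * I) ≠ 0 := Complex.exp_ne_zero _
    have h1 : (1:ℂ) - a * Complex.exp (θ * I) ≠ 0 := by
      apply hne; simp [Complex.norm_exp_ofReal_mul_I]
    have hconj : (starRingEnd ℂ) (1 - a * Complex.exp (θ * I))
        = 1 - a * Complex.exp (-(θ * I)) := by
      simp only [map_sub, map_one, map_mul, Complex.conj_ofReal, ← Complex.exp_conj]
      congr 2
      simp [Complex.conj_I]
    have hns : ((Complex.normSq (1 - a * Complex.exp (θ * I))) : ℂ)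
        = (1 - a * Complex.exp (θ * I)) * (1 - a * Complex.exp (-(θ * I))) := by
      rw [← Complex.mul_conj, hconj]
    have h2 : (1:ℂ) - a * Complex.exp (-(θ * I)) ≠ 0 := by
      rw [← hconj]
      exact fun h => h1 (by simpa using congrArg (starRingEnd ℂ) h)
    have hfac : Complex.exp (θ * I) - a = Complex.exp (θ * I) * (1 - a * Complex.exp (-(θ * I))) := by
      rw [mul_sub, mul_one, mul_comm ((a:ℂ)) _, ← mul_assoc, ← Complex.exp_add]
      simp
    rw [Complex.ofReal_inv, hns, hg, hfac]
    field_simp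
  rw [intervalIntegral.integral_congr (fun θ _ => hpt θ)] at key
  rw [intervalIntegral.integral_const_mul, intervalIntegral.integral_ofReal] at key
  have ha2 : (1:ℝ) - a^2 ≠ 0 := by nlinarith
  have ha2c : ((1:ℝ) - a^2 : ℂ) ≠ 0 := by exact_mod_cast (Complex.ofReal_ne_zero.mpr ha2)
  have hkey2 : ((∫ θ in (0:ℝ)..(2*Real.pi), (Complex.normSq (1 - a * Complex.exp (θ * Complex.I)))⁻¹ : ℝ) : ℂ)
      = ((2 * Real.pi / (1 - a^2) : ℝ) : ℂ) := by
    have hI : (I : ℂ) ≠ 0 := Complex.I_ne_zero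
    apply mul_left_cancel₀ hI
    rw [key]
    have : g a = ((1 - a^2 : ℝ) : ℂ)⁻¹ := by
      simp [hg]
      push_cast
      ring_nf
    rw [this]
    push_cast
    field_simp
  exact_mod_cast hkey2


noncomputable def testF (b s : ℝ) : ℂ → ℂ :=
  fun z => (((1 - b^2) ^ (1/s) : ℝ) : ℂ) * (1 - b*z) ^ ((-2/s : ℝ) : ℂ)

lemma mem_slit (b : ℝ) (hb0 : 0 ≤ b) (hb1 : b < 1) (z : ℂ) (hz : ‖z‖ ≤ 1) :
    (1 - (b:ℂ)*z) ∈ Complex.slitPlane := by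
  rw [Complex.mem_slitPlane_iff]
  left
  have h1 : z.re ≤ ‖z‖ := (abs_le.mp (Complex.abs_re_le_norm z)).2
  have h2 : -‖z‖ ≤ z.re := (abs_le.mp (Complex.abs_re_le_norm z)).1
  simp only [Complex.sub_re, Complex.one_re, Complex.mul_re, Complex.ofReal_re,
    Complex.ofReal_im, zero_mul, sub_zero]
  nlinarith

lemma testF_norm_pow (b s : ℝ) (hb0 : 0 ≤ b) (hb1 : b < 1) (hs : 0 < s)
    (z : ℂ) (hz : ‖z‖ ≤ 1) :
    ‖testF b s z‖ ^ s = (1 - b^2) * (Complex.normSq (1 - b*z))⁻¹ := by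
  have hb2 : (0:ℝ) ≤ 1 - b^2 := by nlinarith
  have hzz : (1 : ℂ) - b*z ≠ 0 := Complex.slitPlane_ne_zero (mem_slit b hb0 hb1 z hz)
  have hA : 0 < ‖1 - b*z‖ := by
    simpa using hzz
  rw [testF]
  simp only [norm_mul, Complex.norm_real, Real.norm_eq_abs,
    Complex.norm_cpow_real]
  rw [_root_.abs_of_nonneg (Real.rpow_nonneg hb2 _)]
  rw [Real.mul_rpow (Real.rpow_nonneg hb2 _) (Real.rpow_nonneg hA.le _)]
  rw [← Real.rpow_mul hb2, ← Real.rpow_mul hA.le]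
  rw [one_div, inv_mul_cancel₀ hs.ne', Real.rpow_one]
  congr 1
  rw [div_mul_cancel₀ _ hs.ne']
  rw [show (-2 : ℝ) = -(2:ℕ) by norm_num, Real.rpow_neg hA.le, Real.rpow_natCast]
  rw [Complex.sq_norm]

lemma Mp_testF_le (b s : ℝ) (hb0 : 0 ≤ b) (hb1 : b < 1) (hs : 0 < s)
    (r : ℝ) (hr0 : 0 < r) (hr1 : r < 1) : Mp s (testF b s) r ≤ 1 := by
  have hbr0 : 0 ≤ b * r := mul_nonneg hb0 hr0.le
  have hbr1 : b * r < 1 := by nlinarith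
  have hptw : ∀ θ : ℝ, ‖testF b s ((r:ℂ) * Complex.exp (θ * Complex.I))‖ ^ s
      = (1 - b^2) * (Complex.normSq (1 - ((b*r : ℝ) : ℂ) * Complex.exp (θ * Complex.I)))⁻¹ := by
    intro θ
    have hz : ‖(r:ℂ) * Complex.exp ((θ:ℂ) * Complex.I)‖ ≤ 1 := by
      simp [norm_mul, Complex.norm_real, Real.norm_eq_abs,
        Complex.norm_exp_ofReal_mul_I, _root_.abs_of_nonneg hr0.le, hr1.le]
    rw [testF_norm_pow b s hb0 hb1 hs ((r:ℂ) * Complex.exp ((θ:ℂ) * Complex.I)) hz]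
    congr 3
    push_cast
    ring
  have hint : (∫ θ in (0:ℝ)..(2 * Real.pi), ‖testF b s ((r:ℂ) * Complex.exp (θ * Complex.I))‖ ^ s)
      = (1 - b^2) * (2 * Real.pi / (1 - (b*r)^2)) := by
    rw [intervalIntegral.integral_congr (g := fun θ : ℝ =>
        (1 - b^2) * (Complex.normSq (1 - ((b*r : ℝ) : ℂ) * Complex.exp (θ * Complex.I)))⁻¹)
      (fun θ _ => hptw θ)]
    rw [intervalIntegral.integral_const_mul, poisson (b*r) hbr0 hbr1]
  rw [Mp, hint]
  have hpi : (0:ℝ) < 2 * Real.pi := by positivity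
  have hden : (0:ℝ) < 1 - (b*r)^2 := by nlinarith
  have hb2 : (0:ℝ) ≤ 1 - b^2 := by nlinarith
  have hbase : 1 / (2 * Real.pi) * ((1 - b^2) * (2 * Real.pi / (1 - (b*r)^2)))
      = (1 - b^2) / (1 - (b*r)^2) := by
    field_simp
  rw [hbase]
  apply Real.rpow_le_one (by positivity)
  · rw [div_le_one hden]
    have hr2 : r^2 ≤ 1 := by nlinarith
    nlinarith [sq_nonneg b]
  · positivity

lemma testF_memHp (b s : ℝ) (hb0 : 0 ≤ b) (hb1 : b < 1) (hs : 0 < s) :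
    MemHp s (testF b s) := by
  constructor
  · intro z hz
    have hz' : ‖z‖ ≤ 1 := by
      have := mem_ball_zero_iff.mp hz; linarith
    exact analyticAt_const.mul
      (((analyticAt_const.sub (analyticAt_const.mul analyticAt_id)).cpow analyticAt_const)
        (mem_slit b hb0 hb1 z hz'))
  · refine ⟨1, ?_⟩
    rintro x ⟨r, rfl⟩
    exact Mp_testF_le b s hb0 hb1 hs r r.2.1 r.2.2

lemma testF_hardyNorm_le (b s : ℝ) (hb0 : 0 ≤ b) (hb1 : b < 1) (hs : 0 < s) :
    hardyNorm s (testF b s) ≤ 1 := by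
  have : Nonempty (Set.Ioo (0:ℝ) 1) := ⟨⟨1/2, by norm_num, by norm_num⟩⟩
  exact ciSup_le fun r => Mp_testF_le b s hb0 hb1 hs r r.2.1 r.2.2

lemma hardyNorm_nonneg_of (s : ℝ) (f : ℂ → ℂ)
    (hb : BddAbove (Set.range fun r : Set.Ioo (0:ℝ) 1 => Mp s f (r : ℝ))) :
    0 ≤ hardyNorm s f := by
  have hne : Nonempty (Set.Ioo (0:ℝ) 1) := ⟨⟨1/2, by norm_num, by norm_num⟩⟩
  obtain ⟨r⟩ := hne
  refine le_trans ?_ (le_ciSup hb r)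
  apply Real.rpow_nonneg
  apply mul_nonneg (by positivity)
  apply intervalIntegral.integral_nonneg (by positivity)
  intro u _
  positivity

lemma testF_hasDerivAt (b s τ : ℝ) (hb0 : 0 ≤ b) (hb1 : b < 1) (hs : 0 < s)
    (hτ0 : 0 ≤ τ) (hτ1 : τ ≤ 1) :
    HasDerivAt (testF b s)
      ((((1 - b^2) ^ (1/s) * (2*b/s) * (1 - b*τ) ^ (-2/s - 1) : ℝ)) : ℂ) ((τ:ℝ) : ℂ) := by
  have hτz : ‖((τ:ℝ):ℂ)‖ ≤ 1 := by
    simp [Complex.norm_real, Real.norm_eq_abs, _root_.abs_of_nonneg hτ0, hτ1]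
  have hmem := mem_slit b hb0 hb1 ((τ:ℝ):ℂ) hτz
  have hpos : (0:ℝ) < 1 - b*τ := by nlinarith
  have h0 : HasDerivAt (fun z : ℂ => 1 - (b:ℂ)*z) (-(b:ℂ)) ((τ:ℝ):ℂ) := by
    simpa using (((hasDerivAt_id (((τ:ℝ)):ℂ)).const_mul (b:ℂ)).const_sub 1)
  have h1 := (h0.cpow_const (c := ((-2/s:ℝ):ℂ)) hmem).const_mul ((((1 - b^2) ^ (1/s) : ℝ)) : ℂ)
  have hval : ((((1 - b^2) ^ (1/s) * (2*b/s) * (1 - b*τ) ^ (-2/s - 1) : ℝ)) : ℂ)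
      = (((1 - b^2) ^ (1/s) : ℝ) : ℂ) *
        (((-2/s:ℝ):ℂ) * (1 - (b:ℂ)*((τ:ℝ):ℂ)) ^ (((-2/s:ℝ):ℂ) - 1) * (-(b:ℂ))) := by
    have hbase : (1 : ℂ) - (b:ℂ)*((τ:ℝ):ℂ) = (((1 - b*τ : ℝ)):ℂ) := by push_cast; ring
    have hexp : (((-2/s:ℝ):ℂ) - 1) = (((-2/s - 1 : ℝ)):ℂ) := by push_cast; ring
    rw [hbase, hexp, ← Complex.ofReal_cpow hpos.le]
    push_cast
    ring
  rw [hval]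
  exact h1

lemma main_est (p q' C₀ : ℝ) (hp0 : 0 < p) (hq' : 0 < q') (μ : Measure ℝ)
    (hfin : μ (Set.Ico (0:ℝ) 1) ≠ ⊤) (b : ℝ) (hb0 : 0 < b) (hb1 : b < 1)
    (key : ‖∫ t in Set.Ico (0:ℝ) 1,
        (starRingEnd ℂ) (testF b p t) *
          (testF b q' t + (t:ℂ) * deriv (testF b q') t) ∂μ‖ ≤ C₀) :
    (μ (Set.Ico b 1)).toReal ≤
      C₀ * ((2*b^2/q')⁻¹ * (1 - b^2) ^ (1/p + 1/q' + 1)) := by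
  have h12 : (0:ℝ) < 1 - b^2 := by nlinarith
  set c : ℝ := (1 - b^2) ^ (1/p) with hc
  set d : ℝ := (1 - b^2) ^ (1/q') with hd
  set φ : ℝ → ℝ := fun τ => (c * (1 - b*τ) ^ (-2/p)) *
      (d * (1 - b*τ) ^ (-2/q') + τ * (d * (2*b/q') * (1 - b*τ) ^ (-2/q' - 1))) with hφ
  -- pointwise identity on Ico 0 1
  have hpt : ∀ τ ∈ Set.Ico (0:ℝ) 1,
      (starRingEnd ℂ) (testF b p τ) * (testF b q' τ + (τ:ℂ) * deriv (testF b q') τ)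
        = ((φ τ : ℝ) : ℂ) := by
    intro τ hτ
    have hpos : (0:ℝ) < 1 - b*τ := by nlinarith [hτ.1, hτ.2]
    have hbase : (1 : ℂ) - (b:ℂ)*((τ:ℝ):ℂ) = (((1 - b*τ : ℝ)):ℂ) := by push_cast; ring
    have hfτ : testF b p ((τ:ℝ):ℂ) = (((c * (1 - b*τ) ^ (-2/p) : ℝ)):ℂ) := by
      rw [testF, hbase, ← Complex.ofReal_cpow hpos.le]
      push_cast; ring
    have hgτ : testF b q' ((τ:ℝ):ℂ) = (((d * (1 - b*τ) ^ (-2/q') : ℝ)):ℂ) := by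
      rw [testF, hbase, ← Complex.ofReal_cpow hpos.le]
      push_cast; ring
    have hdτ : deriv (testF b q') ((τ:ℝ):ℂ)
        = (((d * (2*b/q') * (1 - b*τ) ^ (-2/q' - 1) : ℝ)):ℂ) :=
      (testF_hasDerivAt b q' τ hb0.le hb1 hq' hτ.1 hτ.2.le).deriv
    rw [hfτ, hgτ, hdτ, Complex.conj_ofReal, hφ]
    push_cast
    ring
  -- continuity and integrability
  have hcont : ContinuousOn φ (Set.Icc (0:ℝ) 1) := by
    have hbne : ∀ τ ∈ Set.Icc (0:ℝ) 1, (1 - b*τ) ≠ 0 := by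
      intro τ hτ; nlinarith [hτ.1, hτ.2]
    have hlin : ContinuousOn (fun τ : ℝ => 1 - b*τ) (Set.Icc (0:ℝ) 1) := by fun_prop
    have h1 : ContinuousOn (fun τ : ℝ => (1 - b*τ) ^ (-2/p)) (Set.Icc (0:ℝ) 1) :=
      hlin.rpow_const (fun τ hτ => Or.inl (hbne τ hτ))
    have h2 : ContinuousOn (fun τ : ℝ => (1 - b*τ) ^ (-2/q')) (Set.Icc (0:ℝ) 1) :=
      hlin.rpow_const (fun τ hτ => Or.inl (hbne τ hτ))
    have h3 : ContinuousOn (fun τ : ℝ => (1 - b*τ) ^ (-2/q' - 1)) (Set.Icc (0:ℝ) 1) :=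
      hlin.rpow_const (fun τ hτ => Or.inl (hbne τ hτ))
    exact (continuousOn_const.mul h1).mul
      ((continuousOn_const.mul h2).add
        (continuousOn_id.mul (continuousOn_const.mul h3)))
  obtain ⟨M, hM⟩ := isCompact_Icc.exists_bound_of_continuousOn hcont
  have hintφ : IntegrableOn φ (Set.Ico (0:ℝ) 1) μ := by
    refine Integrable.mono' (g := fun _ => M) ?_ ?_ ?_
    · exact integrable_const_iff.mpr (Or.inr (by
        exact ⟨by rw [Measure.restrict_apply_univ]; exact hfin.lt_top⟩))
    · exact (hcont.mono Set.Ico_subset_Icc_self).aestronglyMeasurable measurableSet_Ico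
    · exact ae_restrict_of_forall_mem measurableSet_Ico
        (fun τ hτ => hM τ (Set.Ico_subset_Icc_self hτ))
  -- nonnegativity
  have hφ0 : ∀ τ ∈ Set.Ico (0:ℝ) 1, 0 ≤ φ τ := by
    intro τ hτ
    have hpos : (0:ℝ) < 1 - b*τ := by nlinarith [hτ.1, hτ.2]
    have hcn : 0 ≤ c := Real.rpow_nonneg h12.le _
    have hdn : 0 ≤ d := Real.rpow_nonneg h12.le _
    have := hτ.1
    apply mul_nonneg (mul_nonneg hcn (Real.rpow_nonneg hpos.le _))
    apply add_nonneg (mul_nonneg hdn (Real.rpow_nonneg hpos.le _))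
    apply mul_nonneg hτ.1
    apply mul_nonneg (mul_nonneg hdn (by positivity)) (Real.rpow_nonneg hpos.le _)
  -- lower bound on Ico b 1
  set m : ℝ := (c * (1 - b^2) ^ (-2/p)) * (b * (d * (2*b/q') * (1 - b^2) ^ (-2/q' - 1)))
    with hm
  have hlow : ∀ τ ∈ Set.Ico b 1, m ≤ φ τ := by
    intro τ hτ
    have hτb : b ≤ τ := hτ.1
    have hτ1 : τ < 1 := hτ.2
    have hpos : (0:ℝ) < 1 - b*τ := by nlinarith
    have hle : 1 - b*τ ≤ 1 - b^2 := by nlinarith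
    have hep : -2/p ≤ 0 := by
      have : (0:ℝ) < 2/p := by positivity
      rw [neg_div]; linarith
    have heq1 : -2/q' ≤ 0 := by
      have : (0:ℝ) < 2/q' := by positivity
      rw [neg_div]; linarith
    have heq2 : -2/q' - 1 ≤ 0 := by linarith
    have e1 : (1 - b^2) ^ (-2/p) ≤ (1 - b*τ) ^ (-2/p) :=
      Real.rpow_le_rpow_of_nonpos hpos hle hep
    have e2 : (1 - b^2) ^ (-2/q' - 1) ≤ (1 - b*τ) ^ (-2/q' - 1) :=
      Real.rpow_le_rpow_of_nonpos hpos hle heq2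
    have hcn : 0 ≤ c := Real.rpow_nonneg h12.le _
    have hdn : 0 ≤ d := Real.rpow_nonneg h12.le _
    have step1 : m ≤ (c * (1 - b*τ) ^ (-2/p)) *
        (τ * (d * (2*b/q') * (1 - b*τ) ^ (-2/q' - 1))) := by
      rw [hm]
      have hX0 : 0 ≤ (1 - b^2) ^ (-2/p) := Real.rpow_nonneg h12.le _
      have hY0 : 0 ≤ (1 - b^2) ^ (-2/q' - 1) := Real.rpow_nonneg h12.le _
      have h1 : c * (1 - b^2) ^ (-2/p) ≤ c * (1 - b*τ) ^ (-2/p) :=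
        mul_le_mul_of_nonneg_left e1 hcn
      have h2 : b * (d * (2*b/q') * (1 - b^2) ^ (-2/q' - 1))
          ≤ τ * (d * (2*b/q') * (1 - b*τ) ^ (-2/q' - 1)) := by
        have hmid : d * (2*b/q') * (1 - b^2) ^ (-2/q' - 1)
            ≤ d * (2*b/q') * (1 - b*τ) ^ (-2/q' - 1) :=
          mul_le_mul_of_nonneg_left e2 (by positivity)
        calc b * (d * (2*b/q') * (1 - b^2) ^ (-2/q' - 1))
            ≤ τ * (d * (2*b/q') * (1 - b^2) ^ (-2/q' - 1)) :=
              mul_le_mul_of_nonneg_right hτb (by positivity)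
          _ ≤ τ * (d * (2*b/q') * (1 - b*τ) ^ (-2/q' - 1)) :=
              mul_le_mul_of_nonneg_left hmid (by linarith)
      exact mul_le_mul h1 h2 (by positivity) (le_trans (by positivity) h1)
    refine step1.trans ?_
    rw [hφ]
    have hnn : 0 ≤ d * (1 - b*τ) ^ (-2/q') :=
      mul_nonneg hdn (Real.rpow_nonneg hpos.le _)
    have hfac : 0 ≤ c * (1 - b*τ) ^ (-2/p) :=
      mul_nonneg hcn (Real.rpow_nonneg hpos.le _)
    nlinarith [mul_nonneg hfac hnn]
  -- put the pieces together
  have hsub : Set.Ico b 1 ⊆ Set.Ico (0:ℝ) 1 := Set.Ico_subset_Ico_left hb0.le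
  have hμb : μ (Set.Ico b 1) ≠ ⊤ := fun h => hfin (top_le_iff.mp (h ▸ measure_mono hsub))
  have hI1 : ∫ t in Set.Ico (0:ℝ) 1,
      (starRingEnd ℂ) (testF b p t) * (testF b q' t + (t:ℂ) * deriv (testF b q') t) ∂μ
      = (((∫ t in Set.Ico (0:ℝ) 1, φ t ∂μ) : ℝ) : ℂ) := by
    rw [setIntegral_congr_fun measurableSet_Ico hpt]
    exact integral_ofReal
  have hI2 : m * (μ (Set.Ico b 1)).toReal ≤ ∫ t in Set.Ico (0:ℝ) 1, φ t ∂μ := by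
    refine le_trans (setIntegral_ge_of_const_le_real measurableSet_Ico hμb hlow
      (hintφ.mono_set hsub)) ?_
    exact setIntegral_mono_set hintφ
      (ae_restrict_of_forall_mem measurableSet_Ico hφ0) (HasSubset.Subset.eventuallyLE hsub)
  have hI3 : m * (μ (Set.Ico b 1)).toReal ≤ C₀ := by
    refine le_trans hI2 (le_trans ?_ key)
    rw [hI1, Complex.norm_real, Real.norm_eq_abs]
    exact le_abs_self _
  -- identify m
  have hm' : m = (2*b^2/q') * (1 - b^2) ^ (-(1/p + 1/q' + 1)) := by
    have : m = (2*b^2/q') * ((1 - b^2) ^ (1/p) * (1 - b^2) ^ (-2/p) *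
        ((1 - b^2) ^ (1/q') * (1 - b^2) ^ (-2/q' - 1))) := by
      rw [hm, hc, hd]; ring
    rw [this, ← Real.rpow_add h12, ← Real.rpow_add h12, ← Real.rpow_add h12]
    congr 1
    congr 1
    field_simp
    ring
  have hmpos : 0 < (2*b^2/q') * (1 - b^2) ^ (-(1/p + 1/q' + 1)) := by
    apply mul_pos (by positivity) (Real.rpow_pos_of_pos h12 _)
  rw [hm'] at hI3
  rw [mul_comm] at hI3
  have h := (le_div_iff₀ hmpos).mpr hI3
  refine h.trans (le_of_eq ?_)
  rw [Real.rpow_neg h12.le, div_eq_mul_inv, mul_inv, inv_inv]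

theorem stmt12 (p q q' : ℝ) (hp0 : 0 < p) (hp1 : p ≤ 1) (hq : 1 < q)
    (hqq' : 1 / q + 1 / q' = 1) (μ : Measure ℝ) (hμ : IsCarleson (1 / p) μ)
    (hbdd : ∃ C > 0, ∀ (f g : ℂ → ℂ), MemHp p f → MemHp q' g →
      ‖∫ t in Set.Ico (0:ℝ) 1,
          (starRingEnd ℂ) (f t) * (g t + (t : ℂ) * deriv g t) ∂μ‖ ≤
        C * hardyNorm p f * hardyNorm q' g) :
    IsCarleson (1 / p + 1 / q' + 1) μ := by
  obtain ⟨C₀, hC₀, hB⟩ := hbdd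
  obtain ⟨C₁, hC₁, hμC⟩ := hμ
  have hq'inv : 0 < 1/q' := by
    have h1 : 1/q < 1 := by
      rw [div_lt_one (by linarith)]; exact hq
    linarith [hqq']
  have hq'0 : 0 < q' := by
    by_contra h
    push_neg at h
    have : 1/q' ≤ 0 := div_nonpos_of_nonneg_of_nonpos zero_le_one h
    linarith
  set s : ℝ := 1/p + 1/q' + 1 with hsdef
  have hs0 : 0 < s := by positivity
  have hfin : μ (Set.Ico (0:ℝ) 1) ≤ ENNReal.ofReal C₁ := by
    have := hμC 0 ⟨le_refl 0, zero_lt_one⟩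
    simpa using this
  have hfin' : μ (Set.Ico (0:ℝ) 1) ≠ ⊤ :=
    ne_top_of_le_ne_top ENNReal.ofReal_ne_top hfin
  refine ⟨(C₁ + C₀ * q' * 2) * 2 ^ s, by positivity, ?_⟩
  intro t ht
  have hne : μ (Set.Ico t 1) ≠ ⊤ :=
    ne_top_of_le_ne_top hfin' (measure_mono (Set.Ico_subset_Ico_left ht.1))
  have h1t : (0:ℝ) ≤ 1 - t := by linarith [ht.2]
  rw [← ENNReal.ofReal_toReal hne]
  apply ENNReal.ofReal_le_ofReal
  have htoR1 : (μ (Set.Ico (0:ℝ) 1)).toReal ≤ C₁ := by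
    have := ENNReal.toReal_mono ENNReal.ofReal_ne_top hfin
    rwa [ENNReal.toReal_ofReal hC₁.le] at this
  have h2pow : (1:ℝ) ≤ 2 ^ s * (1 - t) ^ s ∨ True := Or.inr trivial
  rcases lt_or_ge t (1/2) with hcase | hcase
  · -- small t
    have hT : (μ (Set.Ico t 1)).toReal ≤ C₁ :=
      le_trans (ENNReal.toReal_mono hfin' (measure_mono (Set.Ico_subset_Ico_left ht.1))) htoR1
    have hone : (1:ℝ) ≤ 2 ^ s * (1 - t) ^ s := by
      rw [← Real.mul_rpow (by norm_num) h1t]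
      calc (1:ℝ) = 1 ^ s := (Real.one_rpow s).symm
        _ ≤ (2 * (1 - t)) ^ s := Real.rpow_le_rpow zero_le_one (by linarith) hs0.le
    have hpos2 : (0:ℝ) ≤ (1 - t) ^ s := Real.rpow_nonneg h1t _
    have hpos3 : (0:ℝ) < (2:ℝ) ^ s := Real.rpow_pos_of_pos (by norm_num) _
    nlinarith [mul_nonneg (mul_nonneg (mul_pos hC₀ hq'0).le (by norm_num : (0:ℝ) ≤ 2))
      (mul_nonneg hpos3.le hpos2)]
  · -- large t
    have ht0 : 0 < t := by linarith
    have hkey : ‖∫ τ in Set.Ico (0:ℝ) 1,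
        (starRingEnd ℂ) (testF t p τ) *
          (testF t q' τ + (τ:ℂ) * deriv (testF t q') τ) ∂μ‖ ≤ C₀ := by
      have hmf := testF_memHp t p ht.1 ht.2 hp0
      have hmg := testF_memHp t q' ht.1 ht.2 hq'0
      have h := hB (testF t p) (testF t q') hmf hmg
      have hn1 : hardyNorm p (testF t p) ≤ 1 := testF_hardyNorm_le t p ht.1 ht.2 hp0
      have hn2 : hardyNorm q' (testF t q') ≤ 1 := testF_hardyNorm_le t q' ht.1 ht.2 hq'0
      have hn1' : 0 ≤ hardyNorm p (testF t p) := hardyNorm_nonneg_of p _ hmf.2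
      have hn2' : 0 ≤ hardyNorm q' (testF t q') := hardyNorm_nonneg_of q' _ hmg.2
      refine h.trans ?_
      have hm12 : hardyNorm p (testF t p) * hardyNorm q' (testF t q') ≤ 1 :=
        mul_le_one₀ hn1 hn2' hn2
      calc C₀ * hardyNorm p (testF t p) * hardyNorm q' (testF t q')
          = C₀ * (hardyNorm p (testF t p) * hardyNorm q' (testF t q')) := by ring
        _ ≤ C₀ * 1 := mul_le_mul_of_nonneg_left hm12 hC₀.le
        _ = C₀ := mul_one _
    have hest := main_est p q' C₀ hp0 hq'0 μ hfin' t ht0 ht.2 hkey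
    have h2t : (2*t^2/q')⁻¹ ≤ 2*q' := by
      rw [inv_div, div_le_iff₀ (by positivity)]
      nlinarith [sq_nonneg (t - 1/2)]
    have hts : (1 - t^2) ^ s ≤ 2 ^ s * (1 - t) ^ s := by
      rw [← Real.mul_rpow (by norm_num) h1t]
      exact Real.rpow_le_rpow (by nlinarith [ht.2]) (by nlinarith) hs0.le
    have hchain : C₀ * ((2*t^2/q')⁻¹ * (1 - t^2) ^ s) ≤ C₀ * (2*q' * (2 ^ s * (1 - t) ^ s)) := by
      apply mul_le_mul_of_nonneg_left _ hC₀.le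
      exact mul_le_mul h2t hts (Real.rpow_nonneg (by nlinarith [ht.2]) _) (by positivity)
    have hpos2 : (0:ℝ) ≤ (1 - t) ^ s := Real.rpow_nonneg h1t _
    have hpos3 : (0:ℝ) < (2:ℝ) ^ s := Real.rpow_pos_of_pos (by norm_num) _
    nlinarith [hest.trans hchain, mul_nonneg (mul_nonneg hC₁.le hpos3.le) hpos2]
end

section
/- Let μ be a positive Borel measure on [0,1) with moments μ_m = ∫ t^m dμ(t) satisfying μ_m ≤ C/(m+1)^2 for all m ≥ 0 (which holds when μ is a 2-Carleson measure). Then the Derivative-Hilbert operator DH_μ is bounded on H^2: for f(z) = Σ a_k z^k ∈ H^2, Σ_{n≥0} (n+1)^2 |Σ_{k≥0} μ_{n+k} a_k|^2 ≤ C' Σ_{k≥0} |a_k|^2. -/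
open MeasureTheory Metric Set Complex

open scoped ENNReal


lemma sum_one_div_sqrt (m : ℕ) :
    ∑ k ∈ Finset.range m, 1 / Real.sqrt ((k:ℝ)+1) ≤ 2 * Real.sqrt m := by
  induction m with
  | zero => simp
  | succ m ih =>
    rw [Finset.sum_range_succ]
    have hx : Real.sqrt m ^ 2 = m := Real.sq_sqrt (by positivity)
    have hy : Real.sqrt ((m:ℝ)+1) ^ 2 = (m:ℝ)+1 := Real.sq_sqrt (by positivity)
    have hy0 : 0 < Real.sqrt ((m:ℝ)+1) := Real.sqrt_pos.mpr (by positivity)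
    have hx0 : 0 ≤ Real.sqrt m := Real.sqrt_nonneg _
    have key : 2 * Real.sqrt m + 1 / Real.sqrt ((m:ℝ)+1) ≤ 2 * Real.sqrt ((m:ℝ)+1) := by
      rw [add_comm, ← le_sub_iff_add_le, div_le_iff₀ hy0]
      nlinarith [sq_nonneg (Real.sqrt m - Real.sqrt ((m:ℝ)+1))]
    calc _ ≤ 2 * Real.sqrt m + 1 / Real.sqrt ((m:ℝ)+1) := by gcongr
    _ ≤ _ := by push_cast; exact key

lemma sum_pow32 (n N : ℕ) :
    ∑ k ∈ Finset.range N, 2 / (((n:ℝ)+(k:ℝ)+1) * Real.sqrt ((n:ℝ)+(k:ℝ)+1))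
      ≤ 8 / Real.sqrt ((n:ℝ)+1) := by
  set g : ℕ → ℝ := fun k => 8 / Real.sqrt ((n:ℝ)+(k:ℝ)+1) with hg
  have step : ∀ k : ℕ, 2 / (((n:ℝ)+(k:ℝ)+1) * Real.sqrt ((n:ℝ)+(k:ℝ)+1)) ≤ g k - g (k+1) := by
    intro k
    set a : ℝ := (n:ℝ)+(k:ℝ)+1 with ha
    have ha1 : (1:ℝ) ≤ a := by
      have h1 : (0:ℝ) ≤ (n:ℝ) := Nat.cast_nonneg n
      have h2 : (0:ℝ) ≤ (k:ℝ) := Nat.cast_nonneg k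
      simp only [ha]; linarith
    set x : ℝ := Real.sqrt a with hxd
    set y : ℝ := Real.sqrt (a+1) with hyd
    have hx : x ^ 2 = a := Real.sq_sqrt (by linarith)
    have hy : y ^ 2 = a+1 := Real.sq_sqrt (by linarith)
    have hx0 : 0 < x := Real.sqrt_pos.mpr (by linarith)
    have hy0 : 0 < y := Real.sqrt_pos.mpr (by linarith)
    have h1 : (1:ℝ) ≤ x := by nlinarith
    have hg2 : g (k+1) = 8 / y := by
      simp only [hg, hyd, ha]; push_cast; ring_nf
    have hg1 : g k = 8 / x := rfl
    rw [hg1, hg2, div_sub_div _ _ (ne_of_gt hx0) (ne_of_gt hy0),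
      div_le_div_iff₀ (by positivity) (by positivity)]
    -- goal : 2 * (x * y) ≤ (8 * y - x * 8) * (a * x)
    have hxy1 : (y - x) * (y + x) = 1 := by nlinarith
    have key2 : x * y ≤ 3 * x^2 - 1 := by nlinarith [sq_nonneg (x - y)]
    have hxy2 : x * y^2 = a * x + x := by rw [hy]; ring
    have hx3 : x^2 * y = a * y := by rw [hx]
    have hc : x^2 * x = a * x := by rw [hx]
    have key3 : 2 * (a * y) ≤ 6 * (a*x) - 2 * x := by
      have := mul_le_mul_of_nonneg_left key2 (show (0:ℝ) ≤ 2*x by positivity)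
      nlinarith [this]
    have h3 : (2 * (x*y)) * (x+y) ≤ 8*a*x := by nlinarith [key3, hxy2, hx3]
    have h4 : (2 * (x*y)) * (x+y) ≤ ((8*y - x*8) * (a*x)) * (x+y) := by
      have : ((8*y - x*8) * (a*x)) * (x+y) = 8*a*x * ((y-x)*(y+x)) := by ring
      rw [this, hxy1, mul_one]; exact h3
    exact le_of_mul_le_mul_right h4 (by positivity)
  calc ∑ k ∈ Finset.range N, 2 / (((n:ℝ)+(k:ℝ)+1) * Real.sqrt ((n:ℝ)+(k:ℝ)+1))
      ≤ ∑ k ∈ Finset.range N, (g k - g (k+1)) := Finset.sum_le_sum fun k _ => step k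
    _ = g 0 - g N := Finset.sum_range_sub' g N
    _ ≤ g 0 := by
        have : (0:ℝ) ≤ g N := by simp only [hg]; positivity
        linarith
    _ = 8 / Real.sqrt ((n:ℝ)+1) := by simp [hg]

lemma realA (n N : ℕ) :
    ∑ k ∈ Finset.range N, (1/((n:ℝ)+(k:ℝ)+1)) * (1/Real.sqrt ((k:ℝ)+1))
      ≤ 10 * (1/Real.sqrt ((n:ℝ)+1)) := by
  have hterm : ∀ k : ℕ, (1/((n:ℝ)+(k:ℝ)+1)) * (1/Real.sqrt ((k:ℝ)+1)) ≤
      (if k ≤ n then 1/(((n:ℝ)+1) * Real.sqrt ((k:ℝ)+1)) else 0)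
        + 2 / (((n:ℝ)+(k:ℝ)+1) * Real.sqrt ((n:ℝ)+(k:ℝ)+1)) := by
    intro k
    have hk0 : (0:ℝ) ≤ (k:ℝ) := Nat.cast_nonneg k
    have hn0 : (0:ℝ) ≤ (n:ℝ) := Nat.cast_nonneg n
    have hsk : 0 < Real.sqrt ((k:ℝ)+1) := Real.sqrt_pos.mpr (by linarith)
    by_cases h : k ≤ n
    · rw [if_pos h]
      have h2 : (0:ℝ) ≤ 2 / (((n:ℝ)+(k:ℝ)+1) * Real.sqrt ((n:ℝ)+(k:ℝ)+1)) := by positivity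
      have : (1/((n:ℝ)+(k:ℝ)+1)) * (1/Real.sqrt ((k:ℝ)+1)) ≤
          1/(((n:ℝ)+1) * Real.sqrt ((k:ℝ)+1)) := by
        rw [one_div_mul_one_div]
        apply one_div_le_one_div_of_le (by positivity)
        have : (n:ℝ) + 1 ≤ (n:ℝ)+(k:ℝ)+1 := by linarith
        nlinarith [hsk]
      linarith
    · rw [if_neg h]
      push_neg at h
      have hkn : (n:ℝ) + 1 ≤ (k:ℝ) := by exact_mod_cast h
      have hs2 : Real.sqrt ((n:ℝ)+(k:ℝ)+1) ≤ Real.sqrt 2 * Real.sqrt ((k:ℝ)+1) := by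
        rw [← Real.sqrt_mul (by norm_num)]
        apply Real.sqrt_le_sqrt; linarith
      have hsnk : 0 < Real.sqrt ((n:ℝ)+(k:ℝ)+1) := Real.sqrt_pos.mpr (by linarith)
      have hr2 : Real.sqrt 2 ≤ 2 := by
        nlinarith [Real.sq_sqrt (by norm_num : (0:ℝ) ≤ 2), Real.sqrt_nonneg 2]
      rw [zero_add, one_div_mul_one_div, div_le_div_iff₀ (by positivity) (by positivity)]
      -- 1 * ((n+k+1) * sqrt(n+k+1)) ≤ 2 * ((n+k+1) * sqrt(k+1))
      have : Real.sqrt ((n:ℝ)+(k:ℝ)+1) ≤ 2 * Real.sqrt ((k:ℝ)+1) := by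
        calc Real.sqrt ((n:ℝ)+(k:ℝ)+1) ≤ Real.sqrt 2 * Real.sqrt ((k:ℝ)+1) := hs2
        _ ≤ 2 * Real.sqrt ((k:ℝ)+1) := by gcongr
      nlinarith [this]
  calc ∑ k ∈ Finset.range N, (1/((n:ℝ)+(k:ℝ)+1)) * (1/Real.sqrt ((k:ℝ)+1))
      ≤ ∑ k ∈ Finset.range N, ((if k ≤ n then 1/(((n:ℝ)+1) * Real.sqrt ((k:ℝ)+1)) else 0)
        + 2 / (((n:ℝ)+(k:ℝ)+1) * Real.sqrt ((n:ℝ)+(k:ℝ)+1))) :=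
      Finset.sum_le_sum fun k _ => hterm k
    _ = (∑ k ∈ Finset.range N, if k ≤ n then 1/(((n:ℝ)+1) * Real.sqrt ((k:ℝ)+1)) else 0)
        + ∑ k ∈ Finset.range N, 2 / (((n:ℝ)+(k:ℝ)+1) * Real.sqrt ((n:ℝ)+(k:ℝ)+1)) :=
      Finset.sum_add_distrib
    _ ≤ 2 * (1/Real.sqrt ((n:ℝ)+1)) + 8 / Real.sqrt ((n:ℝ)+1) := by
      gcongr ?_ + ?_
      · rw [← Finset.sum_filter]
        have hsub : (Finset.range N).filter (· ≤ n) ⊆ Finset.range (n+1) := by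
          intro k hk
          simp only [Finset.mem_filter, Finset.mem_range] at *
          omega
        calc ∑ k ∈ (Finset.range N).filter (· ≤ n), 1/(((n:ℝ)+1) * Real.sqrt ((k:ℝ)+1))
            ≤ ∑ k ∈ Finset.range (n+1), 1/(((n:ℝ)+1) * Real.sqrt ((k:ℝ)+1)) :=
            Finset.sum_le_sum_of_subset_of_nonneg hsub (fun k _ _ => by positivity)
          _ = (1/((n:ℝ)+1)) * ∑ k ∈ Finset.range (n+1), 1/Real.sqrt ((k:ℝ)+1) := by
            rw [Finset.mul_sum]; congr 1; ext k; rw [one_div_mul_one_div]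
          _ ≤ (1/((n:ℝ)+1)) * (2 * Real.sqrt ((n:ℝ)+1)) := by
            have h := sum_one_div_sqrt (n+1)
            push_cast at h
            exact mul_le_mul_of_nonneg_left h (by positivity)
          _ = 2 * (1/Real.sqrt ((n:ℝ)+1)) := by
            have hs : Real.sqrt ((n:ℝ)+1) ^ 2 = (n:ℝ)+1 := Real.sq_sqrt (by positivity)
            have hs0 : 0 < Real.sqrt ((n:ℝ)+1) := Real.sqrt_pos.mpr (by positivity)
            field_simp
            nlinarith [hs]
      · exact sum_pow32 n N
    _ = 10 * (1/Real.sqrt ((n:ℝ)+1)) := by ring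

noncomputable def dE (j : ℕ) : ℝ≥0∞ := ENNReal.ofReal (1 / ((j:ℝ)+1))
noncomputable def eE (j : ℕ) : ℝ≥0∞ := ENNReal.ofReal (1 / Real.sqrt ((j:ℝ)+1))

lemma eE_ne_zero (j : ℕ) : eE j ≠ 0 := by
  simp only [eE, ne_eq, ENNReal.ofReal_eq_zero, not_le]
  positivity

lemma eE_ne_top (j : ℕ) : eE j ≠ ⊤ := ENNReal.ofReal_ne_top

lemma ennA (n : ℕ) : ∑' k, dE (n+k) * eE k ≤ ENNReal.ofReal 10 * eE n := by
  rw [ENNReal.tsum_eq_iSup_sum]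
  apply iSup_le
  intro s
  obtain ⟨N, hN⟩ := Finset.exists_nat_subset_range s
  calc ∑ k ∈ s, dE (n+k) * eE k ≤ ∑ k ∈ Finset.range N, dE (n+k) * eE k :=
      Finset.sum_le_sum_of_subset hN
    _ = ENNReal.ofReal (∑ k ∈ Finset.range N, (1/((n:ℝ)+(k:ℝ)+1)) * (1/Real.sqrt ((k:ℝ)+1))) := by
      rw [ENNReal.ofReal_sum_of_nonneg (fun k _ => by positivity)]
      apply Finset.sum_congr rfl
      intro k _
      rw [dE, eE, ← ENNReal.ofReal_mul (by positivity)]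
      congr 2
      push_cast
      ring
    _ ≤ ENNReal.ofReal (10 * (1/Real.sqrt ((n:ℝ)+1))) := ENNReal.ofReal_le_ofReal (realA n N)
    _ = ENNReal.ofReal 10 * eE n := by rw [ENNReal.ofReal_mul (by norm_num), eE]

-- Cauchy-Schwarz in ℝ≥0∞
lemma cs (w u v : ℕ → ℝ≥0∞) (h : ∀ k, (w k)^2 = u k * v k) :
    (∑' k, w k)^2 ≤ (∑' k, u k) * (∑' k, v k) := by
  have hw : ∀ k, w k = (u k)^(1/2:ℝ) * (v k)^(1/2:ℝ) := by
    intro k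
    rw [← ENNReal.mul_rpow_of_nonneg _ _ (by norm_num : (0:ℝ) ≤ 1/2), ← h k,
      ← ENNReal.rpow_natCast (w k) 2, ← ENNReal.rpow_mul]
    norm_num
  have hpq : (2:ℝ).HolderConjugate 2 := by constructor <;> norm_num
  have holder := ENNReal.lintegral_mul_le_Lp_mul_Lq (Measure.count : Measure ℕ) hpq
    (f := fun k => (u k)^(1/2:ℝ)) (g := fun k => (v k)^(1/2:ℝ))
    (by measurability) (by measurability)
  simp only [Pi.mul_apply, lintegral_count] at holder
  have h1 : ∀ x : ℝ≥0∞, (x^(1/2:ℝ))^(2:ℝ) = x := by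
    intro x
    rw [← ENNReal.rpow_mul]
    norm_num
  simp only [← ENNReal.rpow_natCast _ 2] at holder ⊢
  push_cast at holder ⊢
  calc (∑' k, w k)^(2:ℝ) = ((∑' k, (u k)^(1/2:ℝ) * (v k)^(1/2:ℝ)))^(2:ℝ) := by
        congr 1; exact tsum_congr hw
    _ ≤ ((∑' k, ((u k)^(1/2:ℝ))^(2:ℝ))^(1/(2:ℝ)) * (∑' k, ((v k)^(1/2:ℝ))^(2:ℝ))^(1/(2:ℝ)))^(2:ℝ) := by
        exact ENNReal.rpow_le_rpow holder (by norm_num)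
    _ = (∑' k, u k) * (∑' k, v k) := by
        simp only [h1]
        rw [ENNReal.mul_rpow_of_nonneg _ _ (by norm_num : (0:ℝ) ≤ 2),
          ← ENNReal.rpow_mul, ← ENNReal.rpow_mul]
        norm_num

lemma hilbertE (c : ℕ → ℝ≥0∞) :
    ∑' n, (∑' k, dE (n+k) * c k)^2 ≤ ENNReal.ofReal 100 * ∑' k, (c k)^2 := by
  set A : ℝ≥0∞ := ENNReal.ofReal 10 with hA
  have step1 : ∀ n, (∑' k, dE (n+k) * c k)^2 ≤
      (A * eE n) * ∑' k, dE (n+k) * (eE k)⁻¹ * (c k)^2 := by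
    intro n
    have hcs := cs (fun k => dE (n+k) * c k) (fun k => dE (n+k) * eE k)
      (fun k => dE (n+k) * (eE k)⁻¹ * (c k)^2) ?_
    · exact le_trans hcs (mul_le_mul_left (ennA n) _)
    · intro k
      have : eE k * (eE k)⁻¹ = 1 := ENNReal.mul_inv_cancel (eE_ne_zero k) (eE_ne_top k)
      calc (dE (n+k) * c k)^2 = (dE (n+k))^2 * (eE k * (eE k)⁻¹) * (c k)^2 := by
            rw [this]; ring
        _ = (dE (n+k) * eE k) * (dE (n+k) * (eE k)⁻¹ * (c k)^2) := by ring
  calc ∑' n, (∑' k, dE (n+k) * c k)^2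
      ≤ ∑' n, (A * eE n) * ∑' k, dE (n+k) * (eE k)⁻¹ * (c k)^2 :=
        ENNReal.tsum_le_tsum step1
    _ = A * ∑' (n) (k), eE n * (dE (n+k) * (eE k)⁻¹ * (c k)^2) := by
        rw [← ENNReal.tsum_mul_left]
        apply tsum_congr; intro n
        rw [← ENNReal.tsum_mul_left, ← ENNReal.tsum_mul_left]
        apply tsum_congr; intro k
        ring
    _ = A * ∑' (k) (n), eE n * (dE (n+k) * (eE k)⁻¹ * (c k)^2) := by
        rw [ENNReal.tsum_comm]
    _ ≤ A * ∑' k, (A * eE k) * ((eE k)⁻¹ * (c k)^2) := by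
        apply mul_le_mul_right
        apply ENNReal.tsum_le_tsum
        intro k
        calc ∑' n, eE n * (dE (n+k) * (eE k)⁻¹ * (c k)^2)
            = (∑' n, dE (k+n) * eE n) * ((eE k)⁻¹ * (c k)^2) := by
              rw [← ENNReal.tsum_mul_right]
              apply tsum_congr; intro n
              rw [show k + n = n + k from Nat.add_comm k n]
              ring
          _ ≤ (A * eE k) * ((eE k)⁻¹ * (c k)^2) := mul_le_mul_left (ennA k) _
    _ = A * A * ∑' k, (eE k * (eE k)⁻¹) * (c k)^2 := by
        rw [mul_assoc]
        congr 1
        rw [← ENNReal.tsum_mul_left]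
        exact tsum_congr fun k => by ring
    _ = ENNReal.ofReal 100 * ∑' k, (c k)^2 := by
        have h1 : ∀ k : ℕ, (eE k * (eE k)⁻¹) * (c k)^2 = (c k)^2 := by
          intro k
          rw [ENNReal.mul_inv_cancel (eE_ne_zero k) (eE_ne_top k), one_mul]
        rw [tsum_congr h1, hA, ← ENNReal.ofReal_mul (by norm_num)]
        norm_num

lemma tsum_le_of_ennreal {F : ℕ → ℝ} (hF : ∀ n, 0 ≤ F n) {r : ℝ} (hr : 0 ≤ r)
    (h : ∑' n, ENNReal.ofReal (F n) ≤ ENNReal.ofReal r) : ∑' n, F n ≤ r := by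
  by_cases hs : Summable F
  · rw [← ENNReal.ofReal_tsum_of_nonneg hF hs] at h
    exact (ENNReal.ofReal_le_ofReal_iff hr).mp h
  · rw [tsum_eq_zero_of_not_summable hs]; exact hr


theorem stmt14 (μ : Measure ℝ)
    (hmom : ∃ C > 0, ∀ m : ℕ, moment μ m ≤ C / ((m : ℝ) + 1) ^ 2) :
    ∃ C' > 0, ∀ a : ℕ → ℂ, Summable (fun k : ℕ => ‖a k‖ ^ 2) →
      ∑' n : ℕ, ((n : ℝ) + 1) ^ 2 * ‖∑' k : ℕ, (moment μ (n + k) : ℂ) * a k‖ ^ 2 ≤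
        C' * ∑' k : ℕ, ‖a k‖ ^ 2 := by
  obtain ⟨C, hC, hmC⟩ := hmom
  refine ⟨100 * C^2, by positivity, ?_⟩
  intro a ha
  have hmom0 : ∀ m, 0 ≤ moment μ m := fun m =>
    setIntegral_nonneg measurableSet_Ico (fun t ht => pow_nonneg ht.1 m)
  set c : ℕ → ℝ≥0∞ := fun k => ENNReal.ofReal ‖a k‖ with hc
  set S : ℕ → ℂ := fun n => ∑' k, (moment μ (n+k) : ℂ) * a k with hSdef
  -- norm of each term
  have hnrm : ∀ n k : ℕ, ‖(moment μ (n+k) : ℂ) * a k‖ = moment μ (n+k) * ‖a k‖ := by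
    intro n k
    rw [norm_mul, Complex.norm_real, Real.norm_eq_abs, _root_.abs_of_nonneg (hmom0 _)]
  -- step: ofReal ‖S n‖ ≤ ∑' ofReal(moment)·c
  have hnorm : ∀ n : ℕ, ENNReal.ofReal ‖S n‖ ≤
      ∑' k, ENNReal.ofReal (moment μ (n+k)) * c k := by
    intro n
    by_cases hs : Summable (fun k => moment μ (n+k) * ‖a k‖)
    · have hnn : ∀ k, 0 ≤ moment μ (n+k) * ‖a k‖ :=
        fun k => mul_nonneg (hmom0 _) (norm_nonneg _)
      have hs2 : Summable (fun k => ‖(moment μ (n+k):ℂ) * a k‖) := by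
        simpa only [hnrm n] using hs
      have h1 : ‖S n‖ ≤ ∑' k, moment μ (n+k) * ‖a k‖ := by
        calc ‖S n‖ ≤ ∑' k, ‖(moment μ (n+k):ℂ) * a k‖ := norm_tsum_le_tsum_norm hs2
          _ = ∑' k, moment μ (n+k) * ‖a k‖ := tsum_congr (fun k => hnrm n k)
      calc ENNReal.ofReal ‖S n‖ ≤ ENNReal.ofReal (∑' k, moment μ (n+k) * ‖a k‖) :=
            ENNReal.ofReal_le_ofReal h1
        _ = ∑' k, ENNReal.ofReal (moment μ (n+k) * ‖a k‖) :=
            ENNReal.ofReal_tsum_of_nonneg hnn hs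
        _ = ∑' k, ENNReal.ofReal (moment μ (n+k)) * c k :=
            tsum_congr (fun k => ENNReal.ofReal_mul (hmom0 _))
    · have htop : ∑' k, ENNReal.ofReal (moment μ (n+k)) * c k = ⊤ := by
        by_contra h
        apply hs
        have h2 := ENNReal.summable_toReal h
        have : (fun k => ((ENNReal.ofReal (moment μ (n+k)) * c k)).toReal)
            = fun k => moment μ (n+k) * ‖a k‖ := by
          funext k
          rw [hc, ← ENNReal.ofReal_mul (hmom0 _),
            ENNReal.toReal_ofReal (mul_nonneg (hmom0 _) (norm_nonneg _))]
        rwa [this] at h2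
      rw [htop]; exact le_top
  -- moment bound
  have hmomle : ∀ j : ℕ, ENNReal.ofReal (moment μ j) ≤ ENNReal.ofReal C * (dE j)^2 := by
    intro j
    have heq : C / ((j:ℝ)+1)^2 = C * (1/((j:ℝ)+1))^2 := by
      field_simp
    calc ENNReal.ofReal (moment μ j) ≤ ENNReal.ofReal (C * (1/((j:ℝ)+1))^2) :=
          ENNReal.ofReal_le_ofReal (heq ▸ hmC j)
      _ = ENNReal.ofReal C * (dE j)^2 := by
          rw [ENNReal.ofReal_mul hC.le, ENNReal.ofReal_pow (by positivity)]
          rfl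
  -- per-n bound
  have hS : ∀ n : ℕ, ENNReal.ofReal (((n:ℝ)+1)^2 * ‖S n‖^2)
      ≤ (ENNReal.ofReal C)^2 * (∑' k, dE (n+k) * c k)^2 := by
    intro n
    set NE : ℝ≥0∞ := ENNReal.ofReal ((n:ℝ)+1) with hNE
    have hNd : ∀ k : ℕ, NE * dE (n+k) ≤ 1 := by
      intro k
      rw [hNE, dE, ← ENNReal.ofReal_mul (by positivity)]
      calc ENNReal.ofReal (((n:ℝ)+1) * (1/(((n+k:ℕ):ℝ)+1)))
          ≤ ENNReal.ofReal 1 := by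
            apply ENNReal.ofReal_le_ofReal
            rw [mul_one_div, div_le_one (by positivity)]
            push_cast
            linarith [Nat.cast_nonneg (α := ℝ) k]
        _ = 1 := ENNReal.ofReal_one
    calc ENNReal.ofReal (((n:ℝ)+1)^2 * ‖S n‖^2)
        = NE^2 * (ENNReal.ofReal ‖S n‖)^2 := by
          rw [ENNReal.ofReal_mul (by positivity), ENNReal.ofReal_pow (by positivity),
            ENNReal.ofReal_pow (norm_nonneg _)]
      _ ≤ NE^2 * (∑' k, (ENNReal.ofReal C * (dE (n+k))^2) * c k)^2 := by
          gcongr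
          calc ENNReal.ofReal ‖S n‖ ≤ ∑' k, ENNReal.ofReal (moment μ (n+k)) * c k := hnorm n
            _ ≤ ∑' k, (ENNReal.ofReal C * (dE (n+k))^2) * c k := by
                apply ENNReal.tsum_le_tsum
                intro k
                exact mul_le_mul_left (hmomle (n+k)) _
      _ = (ENNReal.ofReal C)^2 * (∑' k, NE * ((dE (n+k))^2 * c k))^2 := by
          rw [ENNReal.tsum_mul_left (a := NE)]
          have : ∑' k, (ENNReal.ofReal C * (dE (n+k))^2) * c k
              = ENNReal.ofReal C * ∑' k, (dE (n+k))^2 * c k := by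
            rw [← ENNReal.tsum_mul_left]
            exact tsum_congr fun k => by ring
          rw [this]
          ring
      _ ≤ (ENNReal.ofReal C)^2 * (∑' k, dE (n+k) * c k)^2 := by
          apply mul_le_mul_right
          apply pow_le_pow_left' ?_ 2
          apply ENNReal.tsum_le_tsum
          intro k
          calc NE * ((dE (n+k))^2 * c k) = (NE * dE (n+k)) * (dE (n+k) * c k) := by ring
            _ ≤ 1 * (dE (n+k) * c k) := mul_le_mul_left (hNd k) _
            _ = dE (n+k) * c k := one_mul _
  -- assemble
  have hc2 : ∀ k : ℕ, (c k)^2 = ENNReal.ofReal (‖a k‖^2) := by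
    intro k
    rw [hc, ← ENNReal.ofReal_pow (norm_nonneg _)]
  have main : ∑' n : ℕ, ENNReal.ofReal (((n:ℝ)+1)^2 * ‖S n‖^2)
      ≤ ENNReal.ofReal (100 * C^2 * ∑' k, ‖a k‖^2) := by
    calc ∑' n : ℕ, ENNReal.ofReal (((n:ℝ)+1)^2 * ‖S n‖^2)
        ≤ ∑' n, (ENNReal.ofReal C)^2 * (∑' k, dE (n+k) * c k)^2 :=
          ENNReal.tsum_le_tsum hS
      _ = (ENNReal.ofReal C)^2 * ∑' n, (∑' k, dE (n+k) * c k)^2 := ENNReal.tsum_mul_left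
      _ ≤ (ENNReal.ofReal C)^2 * (ENNReal.ofReal 100 * ∑' k, (c k)^2) :=
          mul_le_mul_right (hilbertE c) _
      _ = ENNReal.ofReal (100 * C^2 * ∑' k, ‖a k‖^2) := by
          rw [tsum_congr hc2, ← ENNReal.ofReal_tsum_of_nonneg (fun k => by positivity) ha,
            ← ENNReal.ofReal_pow hC.le, ← ENNReal.ofReal_mul (by positivity),
            ← ENNReal.ofReal_mul (by positivity)]
          ring_nf
  have hr : 0 ≤ 100 * C^2 * ∑' k, ‖a k‖^2 :=
    mul_nonneg (by positivity) (tsum_nonneg (fun k => by positivity))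
  exact tsum_le_of_ennreal (fun n => by positivity) hr main
end

section
/- Classical Hilbert inequality: for any square-summable sequence (a_k)_{k≥0} of complex numbers, Σ_{n=0}^∞ ( Σ_{k=0}^∞ |a_k|/(n+k+1) )^2 ≤ π^2 Σ_{k=0}^∞ |a_k|^2. -/
open MeasureTheory Metric Set Complex

lemma arctan_gap {a b : ℝ} (ha : 0 ≤ a) (hab : a ≤ b) :
    (b - a) / (1 + b ^ 2) ≤ Real.arctan b - Real.arctan a := by
  rw [← integral_one_div_one_add_sq]
  have h1 : (b - a) / (1 + b ^ 2) = ∫ _x in a..b, 1 / (1 + b ^ 2) := by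
    rw [intervalIntegral.integral_const, smul_eq_mul]; ring
  rw [h1]
  apply intervalIntegral.integral_mono_on hab intervalIntegrable_const
  · exact (Continuous.intervalIntegrable (by
      exact continuous_const.div (by continuity) (fun x => by positivity)) a b)
  · intro x hx
    have hx0 : 0 ≤ x := le_trans ha hx.1
    have : 1 + x ^ 2 ≤ 1 + b ^ 2 := by nlinarith [hx.2]
    have hpos : (0:ℝ) < 1 + x ^ 2 := by positivity
    exact one_div_le_one_div_of_le hpos this

lemma key_sum {x : ℝ} (hx : 0 < x) :
    ∑' k : ℕ, 1 / ((x + (k : ℝ) + 1/2) * Real.sqrt ((k : ℝ) + 1/2)) ≤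
      Real.pi / Real.sqrt x := by
  set s := Real.sqrt x with hs_def
  have hs : 0 < s := Real.sqrt_pos.2 hx
  have hs2 : s ^ 2 = x := Real.sq_sqrt hx.le
  set g : ℕ → ℝ := fun k => 2 / s * Real.arctan (Real.sqrt ((k : ℝ) - 1/2) / s) with hg_def
  have step : ∀ k : ℕ, 1 / ((x + (k : ℝ) + 1/2) * Real.sqrt ((k : ℝ) + 1/2))
      ≤ g (k + 1) - g k := by
    intro k
    set bk := Real.sqrt ((k : ℝ) + 1/2) with hbk_def
    set ak := Real.sqrt ((k : ℝ) - 1/2) with hak_def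
    have hbk : 0 < bk := Real.sqrt_pos.2 (by positivity)
    have hbk2 : bk ^ 2 = (k : ℝ) + 1/2 := Real.sq_sqrt (by positivity)
    have hak0 : 0 ≤ ak := Real.sqrt_nonneg _
    have hab : ak ≤ bk := Real.sqrt_le_sqrt (by linarith)
    have hakbk : ak * bk ≤ (k : ℝ) := by
      rcases Nat.eq_zero_or_pos k with hk | hk
      · subst hk
        have : ak = 0 := Real.sqrt_eq_zero'.2 (by norm_num)
        simp [this]
      · have hk1 : (1 : ℝ) ≤ (k : ℝ) := by exact_mod_cast hk
        have h1 : 0 ≤ (k : ℝ) - 1/2 := by linarith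
        have : ak * bk = Real.sqrt (((k : ℝ) - 1/2) * ((k : ℝ) + 1/2)) :=
          (Real.sqrt_mul h1 _).symm
        rw [this]
        calc Real.sqrt (((k : ℝ) - 1/2) * ((k : ℝ) + 1/2))
            ≤ Real.sqrt ((k : ℝ) ^ 2) := Real.sqrt_le_sqrt (by nlinarith)
          _ = (k : ℝ) := Real.sqrt_sq (Nat.cast_nonneg k)
    have hgap : 1 ≤ 2 * bk * (bk - ak) := by nlinarith
    have hxk : (0 : ℝ) < x + (k : ℝ) + 1/2 := by positivity
    have harc : (bk / s - ak / s) / (1 + (bk / s) ^ 2)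
        ≤ Real.arctan (bk / s) - Real.arctan (ak / s) :=
      arctan_gap (by positivity) (by gcongr)
    have hgk : g (k + 1) - g k = 2 / s * (Real.arctan (bk / s) - Real.arctan (ak / s)) := by
      simp only [hg_def]
      have : ((k + 1 : ℕ) : ℝ) - 1/2 = (k : ℝ) + 1/2 := by push_cast; ring
      rw [this]
      ring
    have heq : (bk / s - ak / s) / (1 + (bk / s) ^ 2) = s * (bk - ak) / (x + (k : ℝ) + 1/2) := by
      rw [div_sub_div_same]
      have h1 : 1 + (bk / s) ^ 2 = (x + (k : ℝ) + 1/2) / s ^ 2 := by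
        field_simp
        linear_combination 2 * hs2 + 2 * hbk2
      rw [h1]
      field_simp
    have h2 : 2 / s * (s * (bk - ak) / (x + (k : ℝ) + 1/2)) = 2 * (bk - ak) / (x + (k : ℝ) + 1/2) := by
      field_simp
    calc 1 / ((x + (k : ℝ) + 1/2) * bk)
        ≤ 2 / s * ((bk / s - ak / s) / (1 + (bk / s) ^ 2)) := by
          rw [heq, h2, div_le_div_iff₀ (by positivity) hxk]
          nlinarith [mul_nonneg (by linarith : (0:ℝ) ≤ 2 * bk * (bk - ak) - 1) hxk.le]
      _ ≤ g (k + 1) - g k := by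
          rw [hgk]
          exact mul_le_mul_of_nonneg_left harc (by positivity)
  -- now sum over finsets
  apply tsum_le_of_sum_le' (by positivity)
  intro t
  rcases t.eq_empty_or_nonempty with rfl | ht
  · simp; positivity
  set N := t.sup id + 1 with hN
  have hsub : t ⊆ Finset.range N := by
    intro i hi
    exact Finset.mem_range.2 (Nat.lt_succ_of_le (Finset.le_sup (f := id) hi))
  have h3 : ∑ k ∈ t, 1 / ((x + (k : ℝ) + 1/2) * Real.sqrt ((k : ℝ) + 1/2))
      ≤ ∑ k ∈ Finset.range N, 1 / ((x + (k : ℝ) + 1/2) * Real.sqrt ((k : ℝ) + 1/2)) :=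
    Finset.sum_le_sum_of_subset_of_nonneg hsub (fun i _ _ => by positivity)
  have h4 : ∑ k ∈ Finset.range N, 1 / ((x + (k : ℝ) + 1/2) * Real.sqrt ((k : ℝ) + 1/2))
      ≤ ∑ k ∈ Finset.range N, (g (k + 1) - g k) := Finset.sum_le_sum (fun i _ => step i)
  rw [Finset.sum_range_sub] at h4
  have hg0 : g 0 = 0 := by
    simp only [hg_def]
    rw [show ((0:ℕ):ℝ) - 1/2 = -(1/2) by norm_num]
    rw [show Real.sqrt (-(1/2)) = 0 from Real.sqrt_eq_zero'.2 (by norm_num)]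
    simp
  have hgN : g N ≤ Real.pi / s := by
    simp only [hg_def]
    have h5 : Real.arctan (Real.sqrt ((N : ℝ) - 1/2) / s) ≤ Real.pi / 2 :=
      (Real.arctan_lt_pi_div_two _).le
    calc 2 / s * Real.arctan (Real.sqrt ((N:ℝ) - 1/2) / s)
        ≤ 2 / s * (Real.pi / 2) := mul_le_mul_of_nonneg_left h5 (by positivity)
      _ = Real.pi / s := by field_simp
  linarith


lemma tsum_cauchy {u v : ℕ → ℝ} (hu0 : ∀ k, 0 ≤ u k) (hv0 : ∀ k, 0 ≤ v k)
    (hu : Summable (fun k => u k ^ 2)) (hv : Summable (fun k => v k ^ 2)) :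
    (∑' k, u k * v k) ^ 2 ≤ (∑' k, u k ^ 2) * (∑' k, v k ^ 2) := by
  set A := ∑' k, u k ^ 2 with hA_def
  set B := ∑' k, v k ^ 2 with hB_def
  have hA : 0 ≤ A := tsum_nonneg fun k => sq_nonneg _
  have hB : 0 ≤ B := tsum_nonneg fun k => sq_nonneg _
  have h1 : ∑' k, u k * v k ≤ Real.sqrt A * Real.sqrt B := by
    apply tsum_le_of_sum_le' (by positivity)
    intro t
    refine (Real.sum_mul_le_sqrt_mul_sqrt t u v).trans ?_
    gcongr
    · exact Summable.sum_le_tsum t (fun i _ => sq_nonneg _) hu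
    · exact Summable.sum_le_tsum t (fun i _ => sq_nonneg _) hv
  have h0 : 0 ≤ ∑' k, u k * v k := tsum_nonneg fun k => mul_nonneg (hu0 k) (hv0 k)
  calc (∑' k, u k * v k) ^ 2 ≤ (Real.sqrt A * Real.sqrt B) ^ 2 := by
        apply pow_le_pow_left₀ h0 h1
    _ = A * B := by rw [mul_pow, Real.sq_sqrt hA, Real.sq_sqrt hB]

lemma Lsum {c : ℝ} (hc : 0 ≤ c) :
    Summable (fun j : ℕ => 1 / ((c + (j : ℝ) + 1) * Real.sqrt ((j : ℝ) + 1/2))) := by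
  have hbase : Summable (fun j : ℕ => 1 / ((j : ℝ) + 1) ^ (3/2 : ℝ)) := by
    have := (Real.summable_one_div_nat_rpow (p := 3/2)).2 (by norm_num)
    have h2 := (summable_nat_add_iff (f := fun n : ℕ => 1 / (n : ℝ) ^ (3/2 : ℝ)) 1).2 this
    refine h2.congr fun n => ?_
    push_cast
    ring_nf
  apply Summable.of_nonneg_of_le (fun j => by positivity) _ (hbase.mul_left (Real.sqrt 2))
  intro j
  have h1 : ((j : ℝ) + 1) ^ (3/2 : ℝ) = ((j : ℝ) + 1) * Real.sqrt ((j : ℝ) + 1) := by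
    rw [show (3/2 : ℝ) = 1 + 1/2 by norm_num, Real.rpow_add (by positivity), Real.rpow_one,
      ← Real.sqrt_eq_rpow]
  have e1 : Real.sqrt ((j : ℝ) + 1) ≤ Real.sqrt 2 * Real.sqrt ((j : ℝ) + 1/2) := by
    rw [← Real.sqrt_mul (by norm_num)]
    apply Real.sqrt_le_sqrt
    linarith
  rw [h1, mul_one_div, div_le_div_iff₀ (by positivity) (by positivity), one_mul]
  calc ((j : ℝ) + 1) * Real.sqrt ((j : ℝ) + 1)
      ≤ ((j : ℝ) + 1) * (Real.sqrt 2 * Real.sqrt ((j : ℝ) + 1/2)) := by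
        exact mul_le_mul_of_nonneg_left e1 (by positivity)
    _ ≤ (c + (j : ℝ) + 1) * (Real.sqrt 2 * Real.sqrt ((j : ℝ) + 1/2)) := by
        apply mul_le_mul_of_nonneg_right (by linarith) (by positivity)
    _ = Real.sqrt 2 * ((c + (j : ℝ) + 1) * Real.sqrt ((j : ℝ) + 1/2)) := by ring

set_option maxHeartbeats 1000000 in
theorem stmt15 (a : ℕ → ℂ) (ha : Summable (fun k : ℕ => ‖a k‖ ^ 2)) :
    ∑' n : ℕ, (∑' k : ℕ, ‖a k‖ / ((n : ℝ) + (k : ℝ) + 1)) ^ 2 ≤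
      Real.pi ^ 2 * ∑' k : ℕ, ‖a k‖ ^ 2 := by
  have hpi : (0:ℝ) < Real.pi := Real.pi_pos
  set P : ℕ → ℕ → ℝ := fun n k => 1 / (((n:ℝ) + (k:ℝ) + 1) * Real.sqrt ((k:ℝ) + 1/2)) with hP_def
  set Q : ℕ → ℕ → ℝ := fun n k =>
    ‖a k‖ ^ 2 * Real.sqrt ((k:ℝ) + 1/2) / ((n:ℝ) + (k:ℝ) + 1) with hQ_def
  set F : ℕ → ℕ → ℝ := fun k n =>
    Real.pi * ‖a k‖ ^ 2 * Real.sqrt ((k:ℝ) + 1/2) /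
      (((n:ℝ) + (k:ℝ) + 1) * Real.sqrt ((n:ℝ) + 1/2)) with hF_def
  -- helper: √(k+1/2) ≤ √2 * (n+k+1)
  have hhelp : ∀ n k : ℕ, Real.sqrt ((k:ℝ) + 1/2) ≤ Real.sqrt 2 * ((n:ℝ) + (k:ℝ) + 1) := by
    intro n k
    have ht : Real.sqrt ((k:ℝ) + 1/2) ^ 2 = (k:ℝ) + 1/2 := Real.sq_sqrt (by positivity)
    have hs : Real.sqrt 2 ^ 2 = 2 := Real.sq_sqrt (by norm_num)
    have h1 : (0:ℝ) ≤ Real.sqrt 2 := Real.sqrt_nonneg 2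
    have h2 : (0:ℝ) ≤ Real.sqrt ((k:ℝ) + 1/2) := Real.sqrt_nonneg _
    have h3 : (0:ℝ) ≤ (n:ℝ) := Nat.cast_nonneg n
    nlinarith [sq_nonneg (Real.sqrt 2 * Real.sqrt ((k:ℝ) + 1/2) - 1)]
  have hP_sum : ∀ n : ℕ, Summable (P n) := fun n => Lsum (Nat.cast_nonneg n)
  have hQ_le : ∀ n k : ℕ, Q n k ≤ ‖a k‖ ^ 2 * Real.sqrt 2 := by
    intro n k
    simp only [hQ_def]
    rw [div_le_iff₀ (by positivity)]
    calc ‖a k‖ ^ 2 * Real.sqrt ((k:ℝ) + 1/2)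
        ≤ ‖a k‖ ^ 2 * (Real.sqrt 2 * ((n:ℝ) + (k:ℝ) + 1)) :=
          mul_le_mul_of_nonneg_left (hhelp n k) (by positivity)
      _ = ‖a k‖ ^ 2 * Real.sqrt 2 * ((n:ℝ) + (k:ℝ) + 1) := by ring
  have hQ_sum : ∀ n : ℕ, Summable (Q n) := fun n =>
    Summable.of_nonneg_of_le (fun k => by positivity) (hQ_le n) (ha.mul_right _)
  have hQ_nonneg : ∀ n : ℕ, (0:ℝ) ≤ ∑' k, Q n k := fun n => tsum_nonneg fun k => by positivity
  -- Cauchy-Schwarz for each n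
  have inner_CS : ∀ n : ℕ, (∑' k : ℕ, ‖a k‖ / ((n : ℝ) + (k : ℝ) + 1)) ^ 2 ≤
      (∑' k, P n k) * (∑' k, Q n k) := by
    intro n
    have hPp : ∀ k, (0:ℝ) ≤ P n k := fun k => by positivity
    have hQp : ∀ k, (0:ℝ) ≤ Q n k := fun k => by positivity
    have hPu : ∀ k, Real.sqrt (P n k) ^ 2 = P n k := fun k => Real.sq_sqrt (hPp k)
    have hQu : ∀ k, Real.sqrt (Q n k) ^ 2 = Q n k := fun k => Real.sq_sqrt (hQp k)
    have hmul : ∀ k : ℕ, Real.sqrt (P n k) * Real.sqrt (Q n k) =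
        ‖a k‖ / ((n : ℝ) + (k : ℝ) + 1) := by
      intro k
      rw [← Real.sqrt_mul (hPp k)]
      have : P n k * Q n k = (‖a k‖ / ((n : ℝ) + (k : ℝ) + 1)) ^ 2 := by
        simp only [hP_def, hQ_def]
        have h1 : Real.sqrt ((k:ℝ) + 1/2) ≠ 0 := by positivity
        have h2 : ((n:ℝ) + (k:ℝ) + 1) ≠ 0 := by positivity
        field_simp
      rw [this, Real.sqrt_sq (by positivity)]
    have hcs := tsum_cauchy (u := fun k => Real.sqrt (P n k)) (v := fun k => Real.sqrt (Q n k))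
      (fun k => Real.sqrt_nonneg _) (fun k => Real.sqrt_nonneg _)
      ((hP_sum n).congr fun k => (hPu k).symm) ((hQ_sum n).congr fun k => (hQu k).symm)
    rw [tsum_congr hmul, tsum_congr hPu, tsum_congr hQu] at hcs
    exact hcs
  have hPbound : ∀ n : ℕ, ∑' k, P n k ≤ Real.pi / Real.sqrt ((n:ℝ) + 1/2) := by
    intro n
    have h := key_sum (x := (n:ℝ) + 1/2) (by positivity)
    refine le_trans (le_of_eq (tsum_congr fun k => ?_)) h
    simp only [hP_def]
    congr 2
    ring
  -- bound on each outer term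
  have inner_bound : ∀ n : ℕ, (∑' k : ℕ, ‖a k‖ / ((n : ℝ) + (k : ℝ) + 1)) ^ 2 ≤
      ∑' k, F k n := by
    intro n
    refine (inner_CS n).trans ?_
    have h1 : (∑' k, P n k) * (∑' k, Q n k) ≤
        (Real.pi / Real.sqrt ((n:ℝ) + 1/2)) * (∑' k, Q n k) :=
      mul_le_mul_of_nonneg_right (hPbound n) (hQ_nonneg n)
    refine h1.trans (le_of_eq ?_)
    rw [← (hQ_sum n).tsum_mul_left]
    refine tsum_congr fun k => ?_
    simp only [hQ_def, hF_def]
    have h2 : Real.sqrt ((n:ℝ) + 1/2) ≠ 0 := by positivity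
    have h3 : ((n:ℝ) + (k:ℝ) + 1) ≠ 0 := by positivity
    field_simp
  have hFn_sum : ∀ k : ℕ, Summable (F k) := by
    intro k
    refine ((Lsum (Nat.cast_nonneg k)).mul_left
      (Real.pi * ‖a k‖ ^ 2 * Real.sqrt ((k:ℝ) + 1/2))).congr fun n => ?_
    simp only [hF_def]
    rw [mul_one_div, show ((k:ℝ) + (n:ℝ) + 1) = ((n:ℝ) + (k:ℝ) + 1) from by ring]
  have hFk_bound : ∀ k : ℕ, ∑' n, F k n ≤ Real.pi ^ 2 * ‖a k‖ ^ 2 := by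
    intro k
    have hw : (0:ℝ) < Real.sqrt ((k:ℝ) + 1/2) := Real.sqrt_pos.2 (by positivity)
    have e : ∀ n : ℕ, F k n = (Real.pi * ‖a k‖ ^ 2 * Real.sqrt ((k:ℝ) + 1/2)) *
        (1 / ((((k:ℝ) + 1/2) + (n:ℝ) + 1/2) * Real.sqrt ((n:ℝ) + 1/2))) := by
      intro n
      simp only [hF_def]
      rw [show ((k:ℝ) + 1/2) + (n:ℝ) + 1/2 = (n:ℝ) + (k:ℝ) + 1 by ring]
      ring
    rw [tsum_congr e, tsum_mul_left]
    have h := key_sum (x := (k:ℝ) + 1/2) (by positivity)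
    calc (Real.pi * ‖a k‖ ^ 2 * Real.sqrt ((k:ℝ) + 1/2)) *
        ∑' n : ℕ, 1 / ((((k:ℝ) + 1/2) + (n:ℝ) + 1/2) * Real.sqrt ((n:ℝ) + 1/2))
        ≤ (Real.pi * ‖a k‖ ^ 2 * Real.sqrt ((k:ℝ) + 1/2)) *
          (Real.pi / Real.sqrt ((k:ℝ) + 1/2)) :=
          mul_le_mul_of_nonneg_left h (by positivity)
      _ = Real.pi ^ 2 * ‖a k‖ ^ 2 := by
          field_simp
  have hSnk : ∀ n : ℕ, Summable fun k => F k n := by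
    intro n
    have hw : (0:ℝ) < Real.sqrt ((n:ℝ) + 1/2) := Real.sqrt_pos.2 (by positivity)
    have hbound : ∀ k : ℕ, F k n ≤ (Real.pi * Real.sqrt 2 / Real.sqrt ((n:ℝ) + 1/2)) * ‖a k‖ ^ 2 := by
      intro k
      have heq : F k n = (Real.pi * ‖a k‖ ^ 2) *
          (Real.sqrt ((k:ℝ) + 1/2) / (((n:ℝ) + (k:ℝ) + 1) * Real.sqrt ((n:ℝ) + 1/2))) := by
        simp only [hF_def]; ring
      have hb : Real.sqrt ((k:ℝ) + 1/2) / (((n:ℝ) + (k:ℝ) + 1) * Real.sqrt ((n:ℝ) + 1/2))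
          ≤ Real.sqrt 2 / Real.sqrt ((n:ℝ) + 1/2) := by
        rw [div_le_div_iff₀ (by positivity) hw]
        calc Real.sqrt ((k:ℝ) + 1/2) * Real.sqrt ((n:ℝ) + 1/2)
            ≤ (Real.sqrt 2 * ((n:ℝ) + (k:ℝ) + 1)) * Real.sqrt ((n:ℝ) + 1/2) :=
              mul_le_mul_of_nonneg_right (hhelp n k) hw.le
          _ = Real.sqrt 2 * (((n:ℝ) + (k:ℝ) + 1) * Real.sqrt ((n:ℝ) + 1/2)) := by ring
      rw [heq]
      calc (Real.pi * ‖a k‖ ^ 2) *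
          (Real.sqrt ((k:ℝ) + 1/2) / (((n:ℝ) + (k:ℝ) + 1) * Real.sqrt ((n:ℝ) + 1/2)))
          ≤ (Real.pi * ‖a k‖ ^ 2) * (Real.sqrt 2 / Real.sqrt ((n:ℝ) + 1/2)) :=
            mul_le_mul_of_nonneg_left hb (by positivity)
        _ = (Real.pi * Real.sqrt 2 / Real.sqrt ((n:ℝ) + 1/2)) * ‖a k‖ ^ 2 := by ring
    exact Summable.of_nonneg_of_le (fun k => by positivity) hbound (ha.mul_left _)
  have hF_nonneg : ∀ k n : ℕ, (0:ℝ) ≤ F k n := fun k n => by positivity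
  have hF2 : Summable fun k => ∑' n, F k n :=
    Summable.of_nonneg_of_le (fun k => tsum_nonneg fun n => hF_nonneg k n) hFk_bound
      (ha.mul_left _)
  have hFprod : Summable (Function.uncurry F) :=
    (summable_prod_of_nonneg fun p => hF_nonneg p.1 p.2).2 ⟨hFn_sum, hF2⟩
  have hswap : ∑' n : ℕ, ∑' k : ℕ, F k n = ∑' k : ℕ, ∑' n : ℕ, F k n :=
    Summable.tsum_comm' hFprod hFn_sum hSnk
  have G_sum : Summable fun n : ℕ => ∑' k, F k n := by
    have := ((summable_prod_of_nonneg (f := fun p : ℕ × ℕ => F p.2 p.1)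
      fun p => hF_nonneg p.2 p.1).1 hFprod.prod_symm).2
    exact this
  have LHS_sum : Summable fun n : ℕ => (∑' k : ℕ, ‖a k‖ / ((n : ℝ) + (k : ℝ) + 1)) ^ 2 :=
    Summable.of_nonneg_of_le (fun n => sq_nonneg _) inner_bound G_sum
  calc ∑' n : ℕ, (∑' k : ℕ, ‖a k‖ / ((n : ℝ) + (k : ℝ) + 1)) ^ 2
      ≤ ∑' n : ℕ, ∑' k : ℕ, F k n := Summable.tsum_le_tsum inner_bound LHS_sum G_sum
    _ = ∑' k : ℕ, ∑' n : ℕ, F k n := hswap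
    _ ≤ ∑' k : ℕ, Real.pi ^ 2 * ‖a k‖ ^ 2 := Summable.tsum_le_tsum hFk_bound hF2 (ha.mul_left _)
    _ = Real.pi ^ 2 * ∑' k : ℕ, ‖a k‖ ^ 2 := tsum_mul_left
end

section
/- Let 1 < p ≤ q < ∞, 1/q + 1/q' = 1, γ > 0, and let μ be a positive Borel measure on [0,1) that is a (1/p + 1/q' + 1 + γ)-Carleson measure. Set s = 1 + p/q' and s' = 1 + q'/p. Then ∫_{[0,1)} (1-t)^{-s'/q'} dν(t) < ∞ where dν(t) = (1-t)^{-1} dμ(t), and there is a constant C with |∫_{[0,1)} conj(f(t)) (g(t)+t g'(t)) dμ(t)| ≤ C ||f||_{H^p} ||g||_{H^{q'}} for all f ∈ H^p, g ∈ H^{q'}. -/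
open MeasureTheory Metric Set Complex

namespace S16

lemma Mp_nonneg (s : ℝ) (f : ℂ → ℂ) (r : ℝ) : 0 ≤ Mp s f r := by
  apply Real.rpow_nonneg
  apply mul_nonneg (by positivity)
  apply intervalIntegral.integral_nonneg (by positivity)
  intro θ _; positivity

lemma Mp_le_hardyNorm {s : ℝ} {f : ℂ → ℂ}
    (hf : BddAbove (Set.range fun r : Set.Ioo (0:ℝ) 1 => Mp s f (r : ℝ)))
    {r : ℝ} (hr : r ∈ Set.Ioo (0:ℝ) 1) : Mp s f r ≤ hardyNorm s f :=
  le_ciSup hf ⟨r, hr⟩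

lemma hardyNorm_nonneg {s : ℝ} {f : ℂ → ℂ}
    (hf : BddAbove (Set.range fun r : Set.Ioo (0:ℝ) 1 => Mp s f (r : ℝ))) :
    0 ≤ hardyNorm s f :=
  (Mp_nonneg s f (1/2)).trans (Mp_le_hardyNorm hf ⟨by norm_num, by norm_num⟩)

set_option maxHeartbeats 1000000 in
/-- Pointwise kernel lower bound. -/
lemma klb (t θ : ℝ) (ht0 : 0 ≤ t) (ht1 : t < 1) (hθ0 : 0 ≤ θ) (hθ2 : θ ≤ 2*Real.pi) :
    ((1-t)/2 + min θ (2*Real.pi - θ)/5)/5 ≤ ‖circleMap 0 ((1+t)/2) θ - (t:ℂ)‖ := by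
  have hπ := Real.pi_gt_three
  have hπ' := Real.pi_lt_d2
  have hπ0 := Real.pi_pos
  set m := min θ (2*Real.pi - θ) with hm
  have hm0 : 0 ≤ m := le_min hθ0 (by linarith)
  have hmπ : m ≤ Real.pi := by
    rcases le_total θ Real.pi with h | h
    · exact (min_le_left _ _).trans h
    · exact (min_le_right _ _).trans (by linarith)
  have hp2 : (0:ℝ) < 2/Real.pi^2 := by positivity
  have hcos : Real.cos θ ≤ 1 - 2/Real.pi^2 * m^2 := by
    rcases le_total θ Real.pi with h | h
    · have h1 : Real.cos θ ≤ 1 - 2/Real.pi^2 * θ^2 :=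
        Real.cos_le_one_sub_mul_cos_sq (by rw [_root_.abs_of_nonneg hθ0]; exact h)
      have h2 : m^2 ≤ θ^2 := by nlinarith [min_le_left θ (2*Real.pi - θ)]
      nlinarith
    · have h0 : Real.cos θ = Real.cos (θ - 2*Real.pi) := (Real.cos_sub_two_pi θ).symm
      have h1 : Real.cos (θ - 2*Real.pi) ≤ 1 - 2/Real.pi^2 * (θ - 2*Real.pi)^2 :=
        Real.cos_le_one_sub_mul_cos_sq (by rw [_root_.abs_of_nonpos (by linarith)]; linarith)
      have h2 : m^2 ≤ (θ - 2*Real.pi)^2 := by nlinarith [min_le_right θ (2*Real.pi - θ)]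
      nlinarith
  clear_value m
  set r := (1+t)/2 with hr
  have hr0 : 0 ≤ r := by rw [hr]; linarith
  have hrt : r - t = (1-t)/2 := by rw [hr]; ring
  have h2rt0 : t*(1+t) = 2*r*t := by rw [hr]; ring
  clear_value r
  have hre : (circleMap 0 r θ - (t:ℂ)).re = r * Real.cos θ - t := by simp [circleMap]
  have him : (circleMap 0 r θ - (t:ℂ)).im = r * Real.sin θ := by simp [circleMap]
  have hnorm : ‖circleMap 0 r θ - (t:ℂ)‖
      = Real.sqrt ((r * Real.cos θ - t)^2 + (r * Real.sin θ)^2) := by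
    rw [Complex.norm_def, Complex.normSq_apply, hre, him]
    ring_nf
  have hsc := Real.sin_sq_add_cos_sq θ
  have hexp : (r * Real.cos θ - t)^2 + (r * Real.sin θ)^2
      = (r-t)^2 + 2*r*t*(1 - Real.cos θ) := by linear_combination r^2 * hsc
  have h5 : 0 < ((1-t)/2 + m/5)/5 := by
    have : 0 < (1-t)/2 + m/5 := by linarith
    linarith
  rw [hnorm]
  refine (Real.le_sqrt' h5).mpr ?_
  rw [hexp]
  have hcos1 := Real.cos_le_one θ
  rcases le_total t (1/4) with hc | hc
  · have h1 : ((1-t)/2 + m/5)/5 ≤ r - t := by rw [hrt]; linarith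
    have h2 : 0 ≤ 2*r*t*(1 - Real.cos θ) :=
      mul_nonneg (mul_nonneg (mul_nonneg (by norm_num) hr0) ht0) (by linarith)
    nlinarith [h1, h2, h5]
  · have hq : (2/Real.pi^2) * m^2 ≤ 1 - Real.cos θ := by linarith
    have h2rt : 5/16 ≤ 2*r*t := by
      rw [← h2rt0]; nlinarith [mul_nonneg (by linarith : (0:ℝ) ≤ t - 1/4) (by linarith : (0:ℝ) ≤ t + 5/4)]
    have h3 : (5/16)*((2/Real.pi^2)*m^2) ≤ 2*r*t*(1 - Real.cos θ) :=
      mul_le_mul h2rt hq (by positivity) (by linarith)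
    have h4 : (1:ℝ)/5 ≤ 2/Real.pi^2 := by
      rw [div_le_div_iff₀ (by norm_num) (by positivity)]; nlinarith
    have h5' : (5/16)*((1:ℝ)/5*m^2) ≤ (5/16)*((2/Real.pi^2)*m^2) :=
      mul_le_mul_of_nonneg_left (mul_le_mul_of_nonneg_right h4 (sq_nonneg m)) (by norm_num)
    have h6 : m^2/16 ≤ 2*r*t*(1 - Real.cos θ) := by linarith
    rw [hrt]
    nlinarith [sq_nonneg ((1-t)/2 - m/5), sq_nonneg m, h6, hm0, ht1]

lemma kint_aux {b d : ℝ} (hb : 1 < b) (hd : 0 < d) :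
    ∫ θ in (0:ℝ)..(2*Real.pi), (d + θ/5)^(-b) ≤ 5/(b-1) * d^(1-b) := by
  have hπ0 := Real.pi_pos
  have hb0 : (1:ℝ) - b ≠ 0 := by intro h; nlinarith
  have hcont : ContinuousOn (fun θ : ℝ => (d + θ/5)^(-b)) (Set.uIcc 0 (2*Real.pi)) := by
    intro x hx
    rw [Set.uIcc_of_le (by linarith)] at hx
    have hpos : 0 < d + x/5 := by have := hx.1; positivity
    exact ((continuousAt_const.add (continuousAt_id.div_const 5)).rpow_const
      (Or.inl hpos.ne')).continuousWithinAt
  have hint : IntervalIntegrable (fun θ : ℝ => (d + θ/5)^(-b)) MeasureTheory.volume 0 (2*Real.pi) :=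
    hcont.intervalIntegrable
  have hderiv : ∀ θ ∈ Set.uIcc (0:ℝ) (2*Real.pi),
      HasDerivAt (fun x : ℝ => 5/(1-b) * (d + x/5)^(1-b)) ((d + θ/5)^(-b)) θ := by
    intro θ hθ
    rw [Set.uIcc_of_le (by linarith)] at hθ
    have hpos : 0 < d + θ/5 := by have := hθ.1; positivity
    have h1 : HasDerivAt (fun x : ℝ => d + x/5) (1/5) θ := by
      simpa using ((hasDerivAt_id θ).div_const 5).const_add d
    have h2 := h1.rpow_const (p := 1-b) (Or.inl hpos.ne')
    have h3 := h2.const_mul (5/(1-b))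
    refine h3.congr_deriv (Eq.symm ?_)
    rw [show (1:ℝ)-b-1 = -b by ring]
    field_simp
  rw [intervalIntegral.integral_eq_sub_of_hasDerivAt hderiv hint]
  have hX : 0 ≤ (d + 2*Real.pi/5)^(1-b) := Real.rpow_nonneg (by linarith) _
  have hc : 0 < 5/(b-1) := div_pos (by norm_num) (by linarith)
  have hcX : 0 ≤ 5/(b-1) * (d + 2*Real.pi/5)^(1-b) := mul_nonneg hc.le hX
  show 5/(1-b) * (d + 2*Real.pi/5)^(1-b) - 5/(1-b) * (d + 0/5)^(1-b) ≤ 5/(b-1) * d^(1-b)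
  rw [show d + 0/5 = d by ring,
    show (5:ℝ)/(1-b) = -(5/(b-1)) by rw [show (1:ℝ)-b = -(b-1) by ring, div_neg]]
  linarith

set_option maxHeartbeats 1000000 in
lemma kint_real {b : ℝ} (hb : 1 < b) {t : ℝ} (ht0 : 0 ≤ t) (ht1 : t < 1) :
    ∫ θ in (0:ℝ)..(2*Real.pi), ‖circleMap 0 ((1+t)/2) θ - (t:ℂ)‖^(-b)
      ≤ (10 * 5^b/(b-1)) * ((1-t)/2)^(1-b) := by
  have hπ0 := Real.pi_pos
  have hd0 : (0:ℝ) < (1-t)/2 := by linarith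
  have hne : ∀ θ : ℝ, (1+t)/2 - t ≤ ‖circleMap 0 ((1+t)/2) θ - (t:ℂ)‖ := by
    intro θ
    have h2 : ‖circleMap 0 ((1+t)/2) θ‖ = (1+t)/2 := by
      rw [norm_circleMap_zero, _root_.abs_of_nonneg (by linarith)]
    have h3 : ‖(t:ℂ)‖ = t := by rw [Complex.norm_real, Real.norm_of_nonneg ht0]
    have := norm_sub_norm_le (circleMap 0 ((1+t)/2) θ) (t:ℂ)
    linarith
  have hintL : IntervalIntegrable (fun θ : ℝ => ‖circleMap 0 ((1+t)/2) θ - (t:ℂ)‖^(-b))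
      MeasureTheory.volume 0 (2*Real.pi) := by
    apply Continuous.intervalIntegrable
    exact Continuous.rpow_const ((continuous_circleMap 0 _).sub continuous_const).norm
      (fun θ => Or.inl (by have := hne θ; intro h; rw [h] at this; linarith))
  have hcA1 : ContinuousOn (fun θ : ℝ => ((1-t)/2 + θ/5)^(-b)) (Set.uIcc 0 (2*Real.pi)) := by
    intro x hx
    rw [Set.uIcc_of_le (by linarith)] at hx
    have hpos : 0 < (1-t)/2 + x/5 := by have := hx.1; linarith
    exact ((continuousAt_const.add (continuousAt_id.div_const 5)).rpow_const
      (Or.inl hpos.ne')).continuousWithinAt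
  have hcA2 : ContinuousOn (fun θ : ℝ => ((1-t)/2 + (2*Real.pi-θ)/5)^(-b))
      (Set.uIcc 0 (2*Real.pi)) := by
    intro x hx
    rw [Set.uIcc_of_le (by linarith)] at hx
    have hpos : 0 < (1-t)/2 + (2*Real.pi-x)/5 := by have := hx.2; linarith
    exact ((continuousAt_const.add ((continuousAt_const.sub continuousAt_id).div_const 5)).rpow_const
      (Or.inl hpos.ne')).continuousWithinAt
  have hA1 : IntervalIntegrable (fun θ : ℝ => ((1-t)/2 + θ/5)^(-b))
      MeasureTheory.volume 0 (2*Real.pi) := hcA1.intervalIntegrable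
  have hA2 : IntervalIntegrable (fun θ : ℝ => ((1-t)/2 + (2*Real.pi-θ)/5)^(-b))
      MeasureTheory.volume 0 (2*Real.pi) := hcA2.intervalIntegrable
  have h5b : (0:ℝ) < 5^b := Real.rpow_pos_of_pos (by norm_num) b
  have hpt : ∀ θ ∈ Set.Icc (0:ℝ) (2*Real.pi),
      ‖circleMap 0 ((1+t)/2) θ - (t:ℂ)‖^(-b)
        ≤ 5^b * (((1-t)/2 + θ/5)^(-b) + ((1-t)/2 + (2*Real.pi-θ)/5)^(-b)) := by
    intro θ hθ
    have hklb := klb t θ ht0 ht1 hθ.1 hθ.2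
    have hmpos : 0 < ((1-t)/2 + min θ (2*Real.pi - θ)/5)/5 := by
      have h0 : 0 ≤ min θ (2*Real.pi - θ) := le_min hθ.1 (by linarith [hθ.2])
      linarith
    have step1 : ‖circleMap 0 ((1+t)/2) θ - (t:ℂ)‖^(-b)
        ≤ (((1-t)/2 + min θ (2*Real.pi - θ)/5)/5)^(-b) :=
      Real.rpow_le_rpow_of_nonpos hmpos hklb (by linarith)
    have step2 : (((1-t)/2 + min θ (2*Real.pi - θ)/5)/5)^(-b)
        = 5^b * ((1-t)/2 + min θ (2*Real.pi - θ)/5)^(-b) := by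
      have hnum : (0:ℝ) ≤ (1-t)/2 + (θ ⊓ (2*Real.pi - θ))/5 := by linarith
      rw [Real.div_rpow hnum (by norm_num : (0:ℝ) ≤ 5),
        Real.rpow_neg (by norm_num : (0:ℝ) ≤ 5), div_inv_eq_mul]
      ring
    have step3 : ((1-t)/2 + min θ (2*Real.pi - θ)/5)^(-b)
        ≤ ((1-t)/2 + θ/5)^(-b) + ((1-t)/2 + (2*Real.pi-θ)/5)^(-b) := by
      rcases min_choice θ (2*Real.pi - θ) with hmin | hmin <;> rw [hmin]
      · have : 0 ≤ ((1-t)/2 + (2*Real.pi-θ)/5)^(-b) := Real.rpow_nonneg (by linarith [hθ.2]) _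
        linarith
      · have : 0 ≤ ((1-t)/2 + θ/5)^(-b) := Real.rpow_nonneg (by linarith [hθ.1]) _
        linarith
    calc ‖circleMap 0 ((1+t)/2) θ - (t:ℂ)‖^(-b)
        ≤ 5^b * ((1-t)/2 + min θ (2*Real.pi - θ)/5)^(-b) := by rw [← step2]; exact step1
      _ ≤ 5^b * (((1-t)/2 + θ/5)^(-b) + ((1-t)/2 + (2*Real.pi-θ)/5)^(-b)) :=
          mul_le_mul_of_nonneg_left step3 h5b.le
  have hmono := intervalIntegral.integral_mono_on (by linarith : (0:ℝ) ≤ 2*Real.pi)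
    hintL ((hA1.add hA2).const_mul _) hpt
  have hflip : ∫ θ in (0:ℝ)..(2*Real.pi), ((1-t)/2 + (2*Real.pi-θ)/5)^(-b)
      = ∫ θ in (0:ℝ)..(2*Real.pi), ((1-t)/2 + θ/5)^(-b) := by
    have := intervalIntegral.integral_comp_sub_left (a := (0:ℝ)) (b := 2*Real.pi)
      (fun x : ℝ => ((1-t)/2 + x/5)^(-b)) (2*Real.pi)
    simpa using this
  have haux := kint_aux hb hd0
  calc ∫ θ in (0:ℝ)..(2*Real.pi), ‖circleMap 0 ((1+t)/2) θ - (t:ℂ)‖^(-b)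
      ≤ ∫ θ in (0:ℝ)..(2*Real.pi),
          5^b * (((1-t)/2 + θ/5)^(-b) + ((1-t)/2 + (2*Real.pi-θ)/5)^(-b)) := hmono
    _ = 5^b * ((∫ θ in (0:ℝ)..(2*Real.pi), ((1-t)/2 + θ/5)^(-b))
          + ∫ θ in (0:ℝ)..(2*Real.pi), ((1-t)/2 + (2*Real.pi-θ)/5)^(-b)) := by
        rw [intervalIntegral.integral_const_mul, intervalIntegral.integral_add hA1 hA2]
    _ = 5^b * (2 * ∫ θ in (0:ℝ)..(2*Real.pi), ((1-t)/2 + θ/5)^(-b)) := by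
        rw [hflip]; ring
    _ ≤ 5^b * (2 * (5/(b-1) * ((1-t)/2)^(1-b))) := by
        apply mul_le_mul_of_nonneg_left _ h5b.le
        linarith
    _ = (10 * 5^b/(b-1)) * ((1-t)/2)^(1-b) := by field_simp; ring

lemma kint_c {b : ℝ} (hb : 1 < b) {z : ℂ} (hz : ‖z‖ < 1) :
    ∫ θ in (0:ℝ)..(2*Real.pi), ‖circleMap 0 ((1+‖z‖)/2) θ - z‖^(-b)
      ≤ (10 * 5^b/(b-1)) * ((1-‖z‖)/2)^(1-b) := by
  have hz' : ((‖z‖ : ℝ) : ℂ) * Complex.exp (z.arg * Complex.I) = z := by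
    have := Complex.norm_mul_exp_arg_mul_I z
    exact this
  have key : ∀ θ : ℝ, ‖circleMap 0 ((1+‖z‖)/2) θ - z‖
      = ‖circleMap 0 ((1+‖z‖)/2) (θ - z.arg) - ((‖z‖ : ℝ) : ℂ)‖ := by
    intro θ
    have hsplit : Complex.exp (z.arg * Complex.I)
          * (circleMap 0 ((1+‖z‖)/2) (θ - z.arg) - ((‖z‖ : ℝ) : ℂ))
        = circleMap 0 ((1+‖z‖)/2) θ - z := by
      calc Complex.exp (z.arg * Complex.I)
            * (circleMap 0 ((1+‖z‖)/2) (θ - z.arg) - ((‖z‖ : ℝ) : ℂ))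
          = (((1+‖z‖)/2 : ℝ) : ℂ) * Complex.exp (θ * Complex.I)
              - ((‖z‖ : ℝ) : ℂ) * Complex.exp (z.arg * Complex.I) := by
            simp only [circleMap, zero_add]
            rw [mul_sub,
              show Complex.exp (z.arg * Complex.I)
                    * ((((1+‖z‖)/2 : ℝ) : ℂ) * Complex.exp ((θ - z.arg : ℝ) * Complex.I))
                  = (((1+‖z‖)/2 : ℝ) : ℂ) * (Complex.exp ((z.arg : ℝ) * Complex.I)
                    * Complex.exp ((θ - z.arg : ℝ) * Complex.I)) by ring,
              ← Complex.exp_add,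
              show ((z.arg : ℝ) : ℂ) * Complex.I + ((θ - z.arg : ℝ) : ℂ) * Complex.I
                  = (θ : ℂ) * Complex.I by push_cast; ring]
            ring
        _ = circleMap 0 ((1+‖z‖)/2) θ - z := by rw [hz']; simp [circleMap]
    rw [← hsplit, norm_mul,
      Complex.norm_exp_ofReal_mul_I, one_mul]
  have hper : Function.Periodic
      (fun θ : ℝ => ‖circleMap 0 ((1+‖z‖)/2) θ - ((‖z‖ : ℝ) : ℂ)‖^(-b)) (2*Real.pi) := by
    intro x
    simp only [periodic_circleMap 0 ((1+‖z‖)/2) x]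
  calc ∫ θ in (0:ℝ)..(2*Real.pi), ‖circleMap 0 ((1+‖z‖)/2) θ - z‖^(-b)
      = ∫ θ in (0:ℝ)..(2*Real.pi),
          (fun ψ : ℝ => ‖circleMap 0 ((1+‖z‖)/2) ψ - ((‖z‖ : ℝ) : ℂ)‖^(-b)) (θ - z.arg) := by
        apply intervalIntegral.integral_congr
        intro θ _
        simp only [key θ]
    _ = ∫ θ in (0:ℝ) - z.arg..(2*Real.pi) - z.arg,
          ‖circleMap 0 ((1+‖z‖)/2) θ - ((‖z‖ : ℝ) : ℂ)‖^(-b) := by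
        exact intervalIntegral.integral_comp_sub_right
          (fun ψ : ℝ => ‖circleMap 0 ((1+‖z‖)/2) ψ - ((‖z‖ : ℝ) : ℂ)‖^(-b)) z.arg
    _ = ∫ θ in (0:ℝ)..(2*Real.pi), ‖circleMap 0 ((1+‖z‖)/2) θ - ((‖z‖ : ℝ) : ℂ)‖^(-b) := by
        have := hper.intervalIntegral_add_eq (0 - z.arg) 0
        rw [show (0:ℝ) - z.arg + 2*Real.pi = 2*Real.pi - z.arg by ring,
          show (0:ℝ) + 2*Real.pi = 2*Real.pi by ring] at this
        exact this
    _ ≤ (10 * 5^b/(b-1)) * ((1-‖z‖)/2)^(1-b) := kint_real hb (norm_nonneg z) hz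

set_option maxHeartbeats 1000000 in
lemma pointwise_bound {s : ℝ} (hs : 1 < s) :
    ∃ C > 0, ∀ h : ℂ → ℂ, MemHp s h → ∀ z : ℂ, ‖z‖ < 1 →
      ‖h z‖ ≤ C * (1 - ‖z‖) ^ (-(1/s)) * hardyNorm s h := by
  have hπ0 := Real.pi_pos
  set s' := s/(s-1) with hs'def
  have hs1 : (0:ℝ) < s - 1 := by linarith
  have hs'1 : 1 < s' := by rw [hs'def]; rw [lt_div_iff₀ hs1]; linarith
  have hconj : s'.HolderConjugate s := by
    rw [Real.holderConjugate_iff]; constructor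
    · exact hs'1
    · rw [hs'def]; field_simp; ring
  have hA0 : (0:ℝ) < 10 * 5^s'/(s'-1) :=
    div_pos (by positivity) (by linarith)
  set A := (10 * 5^s'/(s'-1))^(1/s') with hAdef
  have hA : 0 < A := Real.rpow_pos_of_pos hA0 _
  refine ⟨(2*Real.pi)⁻¹ * A * (2*Real.pi)^(1/s) * 2^(1/s), by positivity, ?_⟩
  rintro h ⟨han, hbdd⟩ z hz
  set t := ‖z‖ with htdef
  have ht0 : 0 ≤ t := norm_nonneg z
  set r := (1+t)/2 with hrdef
  have hr1 : r < 1 := by rw [hrdef]; linarith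
  have hr0 : 0 < r := by rw [hrdef]; linarith
  have htr : t < r := by rw [hrdef]; linarith
  have hsub : Metric.closedBall (0:ℂ) r ⊆ Metric.ball (0:ℂ) 1 := by
    intro x hx
    rw [Metric.mem_closedBall, Complex.dist_eq, sub_zero] at hx
    rw [Metric.mem_ball, Complex.dist_eq, sub_zero]
    calc ‖x‖ ≤ r := hx
      _ < 1 := hr1
  have hdiff : DiffContOnCl ℂ h (Metric.ball 0 r) := by
    constructor
    · intro x hx
      exact (han x (hsub (Metric.ball_subset_closedBall hx))).differentiableAt.differentiableWithinAt
    · intro x hx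
      have hx' : x ∈ Metric.ball (0:ℂ) 1 := hsub (closure_ball_subset_closedBall hx)
      exact (han x hx').continuousAt.continuousWithinAt
  have hz_ball : z ∈ Metric.ball (0:ℂ) r := by
    rw [Metric.mem_ball, Complex.dist_eq, sub_zero]
    exact htr
  have hC := hdiff.circleIntegral_sub_inv_smul hz_ball
  -- step 1: 2π ‖h z‖ ≤ ∫ K * ‖H‖
  set K : ℝ → ℝ := fun θ => r * ‖circleMap 0 r θ - z‖⁻¹ with hKdef
  set H : ℝ → ℂ := fun θ => h (circleMap 0 r θ) with hHdef
  have hKsub : ∀ θ : ℝ, r - t ≤ ‖circleMap 0 r θ - z‖ := by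
    intro θ
    have h2 : ‖circleMap 0 r θ‖ = r := by
      rw [norm_circleMap_zero, _root_.abs_of_nonneg hr0.le]
    have := norm_sub_norm_le (circleMap 0 r θ) z
    rw [h2] at this
    linarith
  have hKne : ∀ θ : ℝ, ‖circleMap 0 r θ - z‖ ≠ 0 := by
    intro θ
    have := hKsub θ
    intro hcon; rw [hcon] at this; linarith
  have hK0 : ∀ θ, 0 ≤ K θ := fun θ => mul_nonneg hr0.le (inv_nonneg.mpr (norm_nonneg _))
  have hHball : ∀ θ : ℝ, circleMap 0 r θ ∈ Metric.ball (0:ℂ) 1 := by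
    intro θ
    rw [Metric.mem_ball, Complex.dist_eq, sub_zero, norm_circleMap_zero,
      _root_.abs_of_nonneg hr0.le]
    exact hr1
  have hKcont : Continuous K :=
    continuous_const.mul (((continuous_circleMap 0 r).sub continuous_const).norm.inv₀ hKne)
  have hHcont : Continuous H := by
    rw [continuous_iff_continuousAt]
    intro θ
    exact ((han _ (hHball θ)).continuousAt).comp (continuous_circleMap 0 r).continuousAt
  have step1 : 2*Real.pi * ‖h z‖ ≤ ∫ θ in (0:ℝ)..(2*Real.pi), K θ * ‖H θ‖ := by
    have hnorm2pi : ‖(2 * (Real.pi:ℂ) * Complex.I)‖ = 2*Real.pi := by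
      simp only [norm_mul, Complex.norm_I, Complex.norm_two,
        Complex.norm_real, Real.norm_eq_abs, mul_one]
      rw [_root_.abs_of_pos hπ0]
    have e1 : 2*Real.pi * ‖h z‖ = ‖(2 * (Real.pi:ℂ) * Complex.I) • h z‖ := by
      rw [norm_smul, hnorm2pi]
    rw [e1, ← hC]
    calc ‖∮ w in C(0, r), (w - z)⁻¹ • h w‖
        ≤ ∫ θ in (0:ℝ)..(2*Real.pi),
            ‖deriv (circleMap 0 r) θ • ((circleMap 0 r θ - z)⁻¹ • h (circleMap 0 r θ))‖ := by
          exact intervalIntegral.norm_integral_le_integral_norm (by linarith)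
      _ = ∫ θ in (0:ℝ)..(2*Real.pi), K θ * ‖H θ‖ := by
          apply intervalIntegral.integral_congr
          intro θ _
          show ‖deriv (circleMap 0 r) θ • ((circleMap 0 r θ - z)⁻¹ • h (circleMap 0 r θ))‖
            = K θ * ‖H θ‖
          rw [deriv_circleMap, norm_smul, norm_smul, norm_inv]
          have hcirc : ‖circleMap 0 r θ * Complex.I‖ = r := by
            simp only [norm_mul, Complex.norm_I, norm_circleMap_zero, mul_one]
            exact _root_.abs_of_nonneg hr0.le
          rw [hcirc, hKdef, hHdef, mul_assoc]
  -- step 2: Hölder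
  haveI : MeasureTheory.IsFiniteMeasure
      (MeasureTheory.volume.restrict (Set.Ioc (0:ℝ) (2*Real.pi))) := by
    constructor
    rw [MeasureTheory.Measure.restrict_apply_univ, Real.volume_Ioc]
    exact ENNReal.ofReal_lt_top
  set Kc : ℝ → ℂ := fun θ => ((K θ : ℝ) : ℂ) with hKcdef
  have hKcnorm : ∀ θ, ‖Kc θ‖ = K θ := by
    intro θ
    rw [hKcdef]
    simp only [Complex.norm_real]
    exact Real.norm_of_nonneg (hK0 θ)
  have hKmem : MeasureTheory.MemLp Kc (ENNReal.ofReal s')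
      (MeasureTheory.volume.restrict (Set.Ioc (0:ℝ) (2*Real.pi))) := by
    apply MeasureTheory.MemLp.of_bound
      (Complex.continuous_ofReal.comp hKcont).aestronglyMeasurable (r * (r - t)⁻¹)
    apply MeasureTheory.ae_of_all
    intro θ
    rw [show ((Complex.ofReal ∘ K) θ) = Kc θ from rfl, hKcnorm θ]
    apply mul_le_mul_of_nonneg_left _ hr0.le
    exact inv_anti₀ (by linarith) (hKsub θ)
  have hHmem : MeasureTheory.MemLp H (ENNReal.ofReal s)
      (MeasureTheory.volume.restrict (Set.Ioc (0:ℝ) (2*Real.pi))) := by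
    obtain ⟨M, hM⟩ := (isCompact_Icc (a := (0:ℝ)) (b := 2*Real.pi)).exists_bound_of_continuousOn
      hHcont.continuousOn
    apply MeasureTheory.MemLp.of_bound hHcont.aestronglyMeasurable M
    filter_upwards [MeasureTheory.ae_restrict_mem measurableSet_Ioc] with θ hθ
    exact hM θ (Set.Ioc_subset_Icc_self hθ)
  have hHolder := MeasureTheory.integral_mul_norm_le_Lp_mul_Lq hconj hKmem hHmem
  -- step 3: bound the kernel factor
  have hd0 : (0:ℝ) < (1-t)/2 := by linarith
  have hF1 : (∫ θ in Set.Ioc (0:ℝ) (2*Real.pi), ‖Kc θ‖^s')^(1/s')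
      ≤ A * ((1-t)/2)^(-(1/s)) := by
    have hiK : ∫ θ in Set.Ioc (0:ℝ) (2*Real.pi), ‖Kc θ‖^s'
        = r^s' * ∫ θ in (0:ℝ)..(2*Real.pi), ‖circleMap 0 r θ - z‖^(-s') := by
      rw [← intervalIntegral.integral_of_le (by linarith), ← intervalIntegral.integral_const_mul]
      apply intervalIntegral.integral_congr
      intro θ _
      show ‖Kc θ‖^s' = r^s' * ‖circleMap 0 r θ - z‖^(-s')
      rw [hKcnorm θ, hKdef]
      rw [Real.mul_rpow hr0.le (inv_nonneg.mpr (norm_nonneg _)),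
        Real.inv_rpow (norm_nonneg _), ← Real.rpow_neg (norm_nonneg _)]
    have hkc := kint_c (b := s') hs'1 hz
    rw [← htdef, ← hrdef] at hkc
    have hint0 : 0 ≤ ∫ θ in (0:ℝ)..(2*Real.pi), ‖circleMap 0 r θ - z‖^(-s') := by
      apply intervalIntegral.integral_nonneg (by linarith)
      intro θ _
      exact Real.rpow_nonneg (norm_nonneg _) _
    have hr1' : r^s' ≤ 1 := Real.rpow_le_one hr0.le hr1.le (by linarith)
    have hle : ∫ θ in Set.Ioc (0:ℝ) (2*Real.pi), ‖Kc θ‖^s'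
        ≤ (10 * 5^s'/(s'-1)) * ((1-t)/2)^(1-s') := by
      rw [hiK]
      calc r^s' * ∫ θ in (0:ℝ)..(2*Real.pi), ‖circleMap 0 r θ - z‖^(-s')
          ≤ 1 * ((10 * 5^s'/(s'-1)) * ((1-t)/2)^(1-s')) := by
            apply mul_le_mul hr1' hkc hint0 (by norm_num)
        _ = (10 * 5^s'/(s'-1)) * ((1-t)/2)^(1-s') := one_mul _
    have hstep := Real.rpow_le_rpow (by
        apply MeasureTheory.integral_nonneg
        intro θ
        exact Real.rpow_nonneg (norm_nonneg _) _) hle (by positivity : (0:ℝ) ≤ 1/s')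
    refine hstep.trans (le_of_eq ?_)
    have hsne : s ≠ 0 := by linarith
    have hs1ne : s - 1 ≠ 0 := ne_of_gt hs1
    rw [Real.mul_rpow hA0.le (Real.rpow_nonneg hd0.le _), ← Real.rpow_mul hd0.le,
      show (1-s')*(1/s') = -(1/s) by rw [hs'def]; field_simp; ring]
  -- step 4: the function factor
  have hF2 : (∫ θ in Set.Ioc (0:ℝ) (2*Real.pi), ‖H θ‖^s)^(1/s)
      ≤ (2*Real.pi)^(1/s) * hardyNorm s h := by
    have hiH : ∫ θ in Set.Ioc (0:ℝ) (2*Real.pi), ‖H θ‖^s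
        = ∫ θ in (0:ℝ)..(2*Real.pi), ‖H θ‖^s :=
      (intervalIntegral.integral_of_le (by linarith)).symm
    have hX0 : 0 ≤ ∫ θ in (0:ℝ)..(2*Real.pi), ‖H θ‖^s := by
      apply intervalIntegral.integral_nonneg (by linarith)
      intro θ _
      exact Real.rpow_nonneg (norm_nonneg _) _
    have hMp : Mp s h r = ((1/(2*Real.pi)) * ∫ θ in (0:ℝ)..(2*Real.pi), ‖H θ‖^s)^(1/s) := by
      rw [Mp]
      have hpt : ∀ θ : ℝ, h ((r:ℂ) * Complex.exp ((θ:ℂ) * Complex.I)) = H θ := by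
        intro θ; rw [hHdef]; simp [circleMap]
      simp only [hpt]
    have hsplit : (∫ θ in (0:ℝ)..(2*Real.pi), ‖H θ‖^s)^(1/s)
        = (2*Real.pi)^(1/s) * Mp s h r := by
      rw [hMp, ← Real.mul_rpow (by positivity) (mul_nonneg (by positivity) hX0)]
      congr 1
      field_simp
    rw [hiH, hsplit]
    exact mul_le_mul_of_nonneg_left (Mp_le_hardyNorm hbdd ⟨hr0, hr1⟩) (by positivity)
  -- assemble
  have hL0 : 0 ≤ (∫ θ in Set.Ioc (0:ℝ) (2*Real.pi), ‖H θ‖^s)^(1/s) := by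
    apply Real.rpow_nonneg
    apply MeasureTheory.integral_nonneg
    intro θ
    exact Real.rpow_nonneg (norm_nonneg _) _
  have hR0 : 0 ≤ A * ((1-t)/2)^(-(1/s)) :=
    mul_nonneg hA.le (Real.rpow_nonneg (by linarith) _)
  have hmul := mul_le_mul hF1 hF2 hL0 hR0
  have hchain : 2*Real.pi * ‖h z‖
      ≤ A * ((1-t)/2)^(-(1/s)) * ((2*Real.pi)^(1/s) * hardyNorm s h) := by
    refine step1.trans ?_
    have heq : ∫ θ in (0:ℝ)..(2*Real.pi), K θ * ‖H θ‖
        = ∫ θ in Set.Ioc (0:ℝ) (2*Real.pi), ‖Kc θ‖ * ‖H θ‖ := by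
      rw [intervalIntegral.integral_of_le (by linarith)]
      exact MeasureTheory.integral_congr_ae
        (MeasureTheory.ae_of_all _ (fun θ => by
          show K θ * ‖H θ‖ = ‖Kc θ‖ * ‖H θ‖
          rw [hKcnorm θ]))
    rw [heq]
    exact hHolder.trans hmul
  have h2πne : (2*Real.pi) ≠ 0 := by positivity
  have hfinal := mul_le_mul_of_nonneg_left hchain
    (by positivity : (0:ℝ) ≤ (2*Real.pi)⁻¹)
  rw [← mul_assoc, inv_mul_cancel₀ h2πne, one_mul] at hfinal
  refine hfinal.trans (le_of_eq ?_)
  rw [show ((1-t)/2 : ℝ)^(-(1/s)) = (1-t)^(-(1/s)) * 2^(1/s) by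
    rw [Real.div_rpow (by linarith : (0:ℝ) ≤ 1-t) (by norm_num : (0:ℝ) ≤ 2),
      Real.rpow_neg (by norm_num : (0:ℝ) ≤ 2), div_inv_eq_mul]]
  ring

set_option maxHeartbeats 1000000 in
lemma deriv_bound {s : ℝ} (hs : 1 < s) :
    ∃ C > 0, ∀ g : ℂ → ℂ, MemHp s g → ∀ t : ℝ, 0 ≤ t → t < 1 →
      ‖deriv g (t:ℂ)‖ ≤ C * (1-t)^(-(1/s) - 1) * hardyNorm s g := by
  have hπ0 := Real.pi_pos
  obtain ⟨Cp, hCp, hP⟩ := pointwise_bound hs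
  refine ⟨Cp * 2^(1/s) * 2, by positivity, ?_⟩
  intro g hg t ht0 ht1
  set ρ := (1-t)/2 with hρdef
  have hρ0 : 0 < ρ := by rw [hρdef]; linarith
  have hdiff : DifferentiableOn ℂ g (Metric.closedBall (t:ℂ) ρ) := by
    intro x hx
    have hx1 : x ∈ Metric.ball (0:ℂ) 1 := by
      rw [Metric.mem_closedBall, Complex.dist_eq] at hx
      rw [Metric.mem_ball, Complex.dist_eq, sub_zero]
      calc ‖x‖ = ‖(x - (t:ℂ)) + (t:ℂ)‖ := by ring_nf
        _ ≤ ‖x - (t:ℂ)‖ + ‖(t:ℂ)‖ := norm_add_le _ _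
        _ ≤ ρ + t := by
            rw [Complex.norm_real, Real.norm_of_nonneg ht0]
            linarith
        _ < 1 := by rw [hρdef]; linarith
    exact (hg.1 x hx1).differentiableAt.differentiableWithinAt
  have hcoe : ((ρ.toNNReal : ℝ)) = ρ := Real.coe_toNNReal ρ hρ0.le
  have hdiff' : DifferentiableOn ℂ g (Metric.closedBall (t:ℂ) (ρ.toNNReal : ℝ)) := by
    rw [hcoe]; exact hdiff
  have hρ0' : 0 < ρ.toNNReal := Real.toNNReal_pos.mpr hρ0
  have hps := hdiff'.hasFPowerSeriesOnBall hρ0'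
  have hd : deriv g (t:ℂ) = cauchyPowerSeries g (t:ℂ) (ρ.toNNReal : ℝ) 1 (fun _ => 1) :=
    hps.hasFPowerSeriesAt.deriv
  rw [cauchyPowerSeries_apply] at hd
  rw [hcoe] at hd
  have hhn := hardyNorm_nonneg hg.2
  have h1t : (0:ℝ) < 1 - t := by linarith
  have hsup : ∀ w ∈ Metric.sphere (t:ℂ) ρ,
      ‖((1:ℂ)/(w - (t:ℂ)))^1 • ((w - (t:ℂ))⁻¹ • g w)‖
        ≤ ρ⁻¹ * ρ⁻¹ * (Cp * ρ^(-(1/s)) * hardyNorm s g) := by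
    intro w hw
    rw [mem_sphere_iff_norm] at hw
    have hwt : ‖w‖ - t ≤ ρ := by
      have h1 := norm_sub_norm_le w ((t:ℝ):ℂ)
      rw [hw, Complex.norm_real, Real.norm_of_nonneg ht0] at h1
      linarith
    have hw1 : ‖w‖ < 1 := by rw [hρdef] at hwt; linarith
    have hwρ : ρ ≤ 1 - ‖w‖ := by rw [hρdef] at hwt ⊢; linarith
    have hmono : (1 - ‖w‖)^(-(1/s)) ≤ ρ^(-(1/s)) :=
      Real.rpow_le_rpow_of_nonpos hρ0 hwρ (by
        have : 0 < 1/s := by positivity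
        linarith)
    have hgw : ‖g w‖ ≤ Cp * ρ^(-(1/s)) * hardyNorm s g := by
      calc ‖g w‖ ≤ Cp * (1 - ‖w‖)^(-(1/s)) * hardyNorm s g := hP g hg w hw1
        _ ≤ Cp * ρ^(-(1/s)) * hardyNorm s g :=
            mul_le_mul_of_nonneg_right (mul_le_mul_of_nonneg_left hmono hCp.le) hhn
    rw [pow_one, norm_smul, norm_smul, norm_inv, norm_div, norm_one, hw, one_div, mul_assoc]
    exact mul_le_mul_of_nonneg_left
      (mul_le_mul_of_nonneg_left hgw (inv_nonneg.mpr hρ0.le))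
      (inv_nonneg.mpr hρ0.le)
  have hbd := circleIntegral.norm_integral_le_of_norm_le_const hρ0.le hsup
  rw [hd, norm_smul]
  have hn2pi : ‖((2 * (Real.pi:ℂ) * Complex.I))⁻¹‖ = (2*Real.pi)⁻¹ := by
    rw [norm_inv]
    simp only [norm_mul, Complex.norm_I, Complex.norm_two,
      Complex.norm_real, Real.norm_eq_abs, mul_one]
    rw [_root_.abs_of_pos hπ0]
  rw [hn2pi]
  calc (2*Real.pi)⁻¹ * ‖∮ w in C((t:ℂ), ρ), ((1:ℂ)/(w - (t:ℂ)))^1 • ((w - (t:ℂ))⁻¹ • g w)‖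
      ≤ (2*Real.pi)⁻¹ * (2*Real.pi*ρ * (ρ⁻¹ * ρ⁻¹ * (Cp * ρ^(-(1/s)) * hardyNorm s g))) := by
        apply mul_le_mul_of_nonneg_left hbd (by positivity)
    _ = Cp * 2^(1/s) * 2 * (1-t)^(-(1/s) - 1) * hardyNorm s g := by
        rw [hρdef]
        rw [show ((1-t)/2 : ℝ)^(-(1/s)) = (1-t)^(-(1/s)) * 2^(1/s) by
          rw [Real.div_rpow h1t.le (by norm_num : (0:ℝ) ≤ 2),
            Real.rpow_neg (by norm_num : (0:ℝ) ≤ 2), div_inv_eq_mul]]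
        rw [show (1-t : ℝ)^(-(1/s) - 1) = (1-t)^(-(1/s)) * (1-t)⁻¹ by
          rw [Real.rpow_sub h1t, Real.rpow_one, div_eq_mul_inv]]
        field_simp

set_option maxHeartbeats 1000000 in
lemma integrableOn_rpow {a sc C : ℝ} {μ : MeasureTheory.Measure ℝ} (ha : 0 ≤ a)
    (has : a < sc) (hC : 0 < C)
    (hμ : ∀ t ∈ Set.Ico (0:ℝ) 1, μ (Set.Ico t 1) ≤ ENNReal.ofReal (C * (1-t)^sc)) :
    MeasureTheory.IntegrableOn (fun t : ℝ => (1-t)^(-a)) (Set.Ico (0:ℝ) 1) μ := by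
  have hhalf : (0:ℝ) < 1/2 := by norm_num
  have hcont : ContinuousOn (fun t : ℝ => (1-t)^(-a)) (Set.Ico (0:ℝ) 1) := by
    intro x hx
    have h1x : (0:ℝ) < 1 - x := by have := hx.2; linarith
    exact ((continuousAt_const.sub continuousAt_id).rpow_const (Or.inl h1x.ne')).continuousWithinAt
  refine ⟨hcont.aestronglyMeasurable measurableSet_Ico, ?_⟩
  rw [MeasureTheory.hasFiniteIntegral_iff_ofReal ?pos]
  case pos =>
    filter_upwards [MeasureTheory.ae_restrict_mem measurableSet_Ico] with x hx
    exact Real.rpow_nonneg (by have := hx.2; linarith) _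
  -- dyadic decomposition
  set I : ℕ → Set ℝ := fun n => Set.Ico (1-(1/2:ℝ)^n) (1-(1/2:ℝ)^(n+1)) with hIdef
  have hpow_pos : ∀ n : ℕ, (0:ℝ) < (1/2)^n := fun n => pow_pos hhalf n
  have hpow_le1 : ∀ n : ℕ, ((1/2:ℝ))^n ≤ 1 := fun n =>
    pow_le_one₀ (by norm_num) (by norm_num)
  have hunion : Set.Ico (0:ℝ) 1 = ⋃ n, I n := by
    ext x
    simp only [Set.mem_iUnion, hIdef, Set.mem_Ico]
    constructor
    · rintro ⟨hx0, hx1⟩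
      have hex : ∃ n : ℕ, (1/2:ℝ)^n < 1 - x := exists_pow_lt_of_lt_one (by linarith) (by norm_num)
      classical
      have hfind := Nat.find_spec hex
      have hne : Nat.find hex ≠ 0 := by
        intro h0
        rw [h0] at hfind
        simp at hfind
        linarith
      obtain ⟨m, hm⟩ := Nat.exists_eq_succ_of_ne_zero hne
      rw [hm, Nat.succ_eq_add_one] at hfind
      refine ⟨m, ?_, ?_⟩
      · have := Nat.find_min hex (m := m) (by omega)
        push_neg at this
        linarith
      · linarith
    · rintro ⟨n, hn1, hn2⟩
      constructor
      · have := hpow_le1 n; linarith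
      · have := hpow_pos (n+1); linarith
  have hdisj : Pairwise (Function.onFun Disjoint I) := by
    have key : ∀ i j : ℕ, i < j → Disjoint (I i) (I j) := by
      intro i j hij
      rw [Set.disjoint_left]
      rintro x ⟨_, hx2⟩ ⟨hx3, _⟩
      have hmono : ((1/2:ℝ))^j ≤ (1/2)^(i+1) :=
        pow_le_pow_of_le_one (by norm_num) (by norm_num) (by omega)
      linarith
    intro i j hij
    rcases lt_or_gt_of_ne hij with h | h
    · exact key i j h
    · exact (key j i h).symm
  rw [hunion, MeasureTheory.lintegral_iUnion (fun n => measurableSet_Ico) hdisj]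
  -- term bound
  have hterm : ∀ n : ℕ, ∫⁻ t in I n, ENNReal.ofReal ((1-t)^(-a)) ∂μ
      ≤ ENNReal.ofReal ((C * (1/2:ℝ)^(-a)) * ((1/2:ℝ)^(sc-a))^n) := by
    intro n
    have hbnd : ∀ t ∈ I n, ENNReal.ofReal ((1-t)^(-a))
        ≤ ENNReal.ofReal (((1/2:ℝ)^(n+1))^(-a)) := by
      intro t ht
      apply ENNReal.ofReal_le_ofReal
      apply Real.rpow_le_rpow_of_nonpos (hpow_pos (n+1)) _ (by linarith)
      have := ht.2; simp only [hIdef, Set.mem_Ico] at ht; linarith [ht.2]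
    calc ∫⁻ t in I n, ENNReal.ofReal ((1-t)^(-a)) ∂μ
        ≤ ∫⁻ _ in I n, ENNReal.ofReal (((1/2:ℝ)^(n+1))^(-a)) ∂μ :=
          MeasureTheory.setLIntegral_mono measurable_const hbnd
      _ = ENNReal.ofReal (((1/2:ℝ)^(n+1))^(-a)) * μ (I n) :=
          MeasureTheory.setLIntegral_const _ _
      _ ≤ ENNReal.ofReal (((1/2:ℝ)^(n+1))^(-a)) * ENNReal.ofReal (C * ((1/2:ℝ)^n)^sc) := by
          apply mul_le_mul_right
          have hsub : I n ⊆ Set.Ico (1-(1/2:ℝ)^n) 1 := by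
            apply Set.Ico_subset_Ico_right
            have := hpow_pos (n+1); linarith
          refine (MeasureTheory.measure_mono hsub).trans ?_
          have hmem : 1-(1/2:ℝ)^n ∈ Set.Ico (0:ℝ) 1 := by
            constructor
            · have := hpow_le1 n; linarith
            · have := hpow_pos n; linarith
          have := hμ _ hmem
          rwa [show 1 - (1-(1/2:ℝ)^n) = (1/2:ℝ)^n by ring] at this
      _ = ENNReal.ofReal ((C * (1/2:ℝ)^(-a)) * ((1/2:ℝ)^(sc-a))^n) := by
          rw [← ENNReal.ofReal_mul (Real.rpow_nonneg (by positivity) _)]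
          congr 1
          rw [← Real.rpow_natCast (1/2:ℝ) (n+1), ← Real.rpow_natCast (1/2:ℝ) n,
            ← Real.rpow_natCast ((1/2:ℝ)^(sc-a)) n,
            ← Real.rpow_mul hhalf.le, ← Real.rpow_mul hhalf.le, ← Real.rpow_mul hhalf.le]
          rw [mul_comm (((1/2:ℝ))^((((n+1):ℕ):ℝ) * (-a))) _, mul_assoc,
            ← Real.rpow_add hhalf, mul_assoc, ← Real.rpow_add hhalf]
          congr 1
          push_cast
          ring
  refine lt_of_le_of_lt (ENNReal.tsum_le_tsum hterm) ?_
  have hr1 : ((1/2:ℝ))^(sc-a) < 1 :=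
    Real.rpow_lt_one (by norm_num) (by norm_num) (by linarith)
  have hr0 : (0:ℝ) ≤ ((1/2:ℝ))^(sc-a) := Real.rpow_nonneg (by norm_num) _
  calc ∑' n : ℕ, ENNReal.ofReal ((C * (1/2:ℝ)^(-a)) * ((1/2:ℝ)^(sc-a))^n)
      = ∑' n : ℕ, ENNReal.ofReal (C * (1/2:ℝ)^(-a))
          * (ENNReal.ofReal ((1/2:ℝ)^(sc-a)))^n := by
        congr 1
        funext n
        rw [ENNReal.ofReal_mul (by positivity), ENNReal.ofReal_pow hr0]
    _ = ENNReal.ofReal (C * (1/2:ℝ)^(-a)) * (1 - ENNReal.ofReal ((1/2:ℝ)^(sc-a)))⁻¹ := by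
        rw [ENNReal.tsum_mul_left, ENNReal.tsum_geometric]
    _ < ⊤ := by
        apply ENNReal.mul_lt_top ENNReal.ofReal_lt_top
        rw [ENNReal.inv_lt_top]
        exact tsub_pos_of_lt (ENNReal.ofReal_lt_one.mpr hr1)

end S16

open S16 in
set_option maxHeartbeats 1000000 in
theorem stmt16 (p q q' γ : ℝ) (hp : 1 < p) (hpq : p ≤ q)
    (hqq' : 1 / q + 1 / q' = 1) (hγ : 0 < γ) (μ : Measure ℝ)
    (hμ : IsCarleson (1 / p + 1 / q' + 1 + γ) μ) :
    MeasureTheory.IntegrableOn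
      (fun t : ℝ => (1 - t) ^ (-((1 + q' / p) / q')) * (1 - t)⁻¹)
      (Set.Ico (0:ℝ) 1) μ ∧
    ∃ C > 0, ∀ (f g : ℂ → ℂ), MemHp p f → MemHp q' g →
      ‖∫ t in Set.Ico (0:ℝ) 1,
          (starRingEnd ℂ) (f t) * (g t + (t : ℂ) * deriv g t) ∂μ‖ ≤
        C * hardyNorm p f * hardyNorm q' g := by
  have hq1 : 1 < q := lt_of_lt_of_le hp hpq
  have hq0 : 0 < q := by linarith
  have hp0 : 0 < p := by linarith
  have hinvq1 : 1/q < 1 := by rw [div_lt_one hq0]; exact hq1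
  have hinvq0 : 0 < 1/q := by positivity
  have hq'inv : 1/q' = 1 - 1/q := by linarith
  have hq'inv_pos : 0 < 1/q' := by rw [hq'inv]; linarith
  have hq'pos : 0 < q' := by
    rcases lt_trichotomy q' 0 with h | h | h
    · exfalso
      have : 1/q' < 0 := div_neg_of_pos_of_neg one_pos h
      linarith
    · exfalso
      rw [h, div_zero] at hq'inv_pos
      linarith
    · exact h
  have hq'1 : 1 < q' := by
    have h2 : 1/q' < 1 := by rw [hq'inv]; linarith
    rwa [div_lt_one hq'pos] at h2
  set a := 1/p + 1/q' + 1 with hadef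
  have ha : 0 ≤ a := by rw [hadef]; positivity
  have has : a < 1/p + 1/q' + 1 + γ := by rw [hadef]; linarith
  obtain ⟨C₀, hC₀, hcar⟩ := hμ
  have hint : MeasureTheory.IntegrableOn (fun t : ℝ => (1-t)^(-a)) (Set.Ico (0:ℝ) 1) μ :=
    integrableOn_rpow ha has hC₀ hcar
  constructor
  · apply hint.congr_fun ?_ measurableSet_Ico
    intro t ht
    have h1t : (0:ℝ) < 1 - t := by have := ht.2; linarith
    have hexp' : (1 + q'/p)/q' = 1/q' + 1/p := by
      field_simp
    show (1-t)^(-a) = (1-t)^(-((1 + q'/p)/q')) * (1-t)⁻¹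
    rw [hexp', show ((1-t:ℝ))⁻¹ = (1-t)^(-1:ℝ) from (Real.rpow_neg_one _).symm,
      ← Real.rpow_add h1t]
    congr 1
    rw [hadef]
    ring
  · obtain ⟨Cf, hCf, hPf⟩ := pointwise_bound hp
    obtain ⟨Cg, hCg, hPg⟩ := pointwise_bound hq'1
    obtain ⟨Cd, hCd, hPd⟩ := deriv_bound hq'1
    set I₀ := ∫ t in Set.Ico (0:ℝ) 1, (1-t)^(-a) ∂μ with hI₀def
    have hI₀ : 0 ≤ I₀ := by
      rw [hI₀def]
      apply MeasureTheory.setIntegral_nonneg measurableSet_Ico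
      intro t ht
      exact Real.rpow_nonneg (by have := ht.2; linarith) _
    set K₀ := Cf * (Cg + Cd) with hK₀def
    have hK₀ : 0 < K₀ := by rw [hK₀def]; positivity
    refine ⟨K₀ * (I₀ + 1), by positivity, ?_⟩
    intro f g hf hg
    have hnf := hardyNorm_nonneg hf.2
    have hng := hardyNorm_nonneg hg.2
    have hb : ∀ t ∈ Set.Ico (0:ℝ) 1,
        ‖(starRingEnd ℂ) (f t) * (g t + (t:ℂ) * deriv g t)‖
          ≤ (K₀ * hardyNorm p f * hardyNorm q' g) * (1-t)^(-a) := by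
      intro t ht
      obtain ⟨ht0, ht1⟩ := ht
      have h1t : (0:ℝ) < 1 - t := by linarith
      have hz : ‖((t:ℝ):ℂ)‖ = t := by rw [Complex.norm_real, Real.norm_of_nonneg ht0]
      have hz1 : ‖((t:ℝ):ℂ)‖ < 1 := by rw [hz]; exact ht1
      have hf_bd := hPf f hf _ hz1
      have hg_bd := hPg g hg _ hz1
      rw [hz] at hf_bd hg_bd
      have hd_bd := hPd g hg t ht0 ht1
      have hmono : (1-t)^(-(1/q')) ≤ (1-t)^(-(1/q') - 1) :=
        Real.rpow_le_rpow_of_exponent_ge h1t (by linarith) (by linarith)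
      have e1 : ‖g ((t:ℝ):ℂ)‖ ≤ Cg * (1-t)^(-(1/q') - 1) * hardyNorm q' g :=
        hg_bd.trans (mul_le_mul_of_nonneg_right
          (mul_le_mul_of_nonneg_left hmono hCg.le) hng)
      have e2 : ‖((t:ℝ):ℂ) * deriv g ((t:ℝ):ℂ)‖ ≤ Cd * (1-t)^(-(1/q') - 1) * hardyNorm q' g := by
        rw [norm_mul, hz]
        calc t * ‖deriv g ((t:ℝ):ℂ)‖ ≤ 1 * ‖deriv g ((t:ℝ):ℂ)‖ :=
              mul_le_mul_of_nonneg_right (le_of_lt ht1) (norm_nonneg _)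
          _ = ‖deriv g ((t:ℝ):ℂ)‖ := one_mul _
          _ ≤ _ := hd_bd
      have hsum : ‖g ((t:ℝ):ℂ) + ((t:ℝ):ℂ) * deriv g ((t:ℝ):ℂ)‖
          ≤ (Cg + Cd) * (1-t)^(-(1/q') - 1) * hardyNorm q' g := by
        refine (norm_add_le _ _).trans ?_
        have := add_le_add e1 e2
        linarith [this]
      have hconjnorm : ‖(starRingEnd ℂ) (f ((t:ℝ):ℂ))‖ = ‖f ((t:ℝ):ℂ)‖ := by
        rw [Complex.norm_conj]
      rw [norm_mul, hconjnorm]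
      have hfin := mul_le_mul hf_bd hsum (norm_nonneg _)
        (by positivity)
      refine hfin.trans (le_of_eq ?_)
      rw [show (-a : ℝ) = (-(1/p)) + (-(1/q') - 1) by rw [hadef]; ring, Real.rpow_add h1t]
      rw [hK₀def]
      ring
    have hbint : MeasureTheory.Integrable
        (fun t : ℝ => (K₀ * hardyNorm p f * hardyNorm q' g) * (1-t)^(-a))
        (μ.restrict (Set.Ico (0:ℝ) 1)) :=
      hint.const_mul _
    have hbd_ae : ∀ᵐ (t : ℝ) ∂μ.restrict (Set.Ico (0:ℝ) 1),
        ‖(starRingEnd ℂ) (f t) * (g t + (t:ℂ) * deriv g t)‖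
          ≤ (K₀ * hardyNorm p f * hardyNorm q' g) * (1-t)^(-a) := by
      filter_upwards [MeasureTheory.ae_restrict_mem measurableSet_Ico] with t ht
      exact hb t ht
    calc ‖∫ t in Set.Ico (0:ℝ) 1, (starRingEnd ℂ) (f t) * (g t + (t:ℂ) * deriv g t) ∂μ‖
        ≤ ∫ t in Set.Ico (0:ℝ) 1, (K₀ * hardyNorm p f * hardyNorm q' g) * (1-t)^(-a) ∂μ :=
          MeasureTheory.norm_integral_le_of_norm_le hbint hbd_ae
      _ = (K₀ * hardyNorm p f * hardyNorm q' g) * I₀ := by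
          rw [hI₀def]
          exact MeasureTheory.integral_const_mul _ _
      _ ≤ K₀ * (I₀ + 1) * hardyNorm p f * hardyNorm q' g := by
          nlinarith [mul_nonneg hnf hng, mul_nonneg (mul_nonneg hK₀.le hnf) hng]
end

section
/- Let μ be a positive Borel measure on [0,1) with moments μ_m = ∫ t^m dμ(t). If μ is a vanishing 2-Carleson measure, i.e. μ([t,1)) = o((1-t)^2) as t → 1^-, then (m+1)^2 μ_m → 0 as m → ∞. -/
open MeasureTheory Metric Set Complex

lemma tail_bound (μ : Measure ℝ) {ε δ : ℝ} (hε : 0 ≤ ε) (hδ0 : 0 ≤ δ) (hδ1 : δ < 1)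
    (hb : ∀ t ∈ Set.Ico δ 1, μ (Set.Ico t 1) ≤ ENNReal.ofReal (ε * (1 - t) ^ 2))
    (k : ℕ) :
    ∫⁻ t in Set.Ico δ 1, ENNReal.ofReal (t ^ (k + 1)) ∂μ ≤
      ENNReal.ofReal (2 * ε / (((k:ℝ) + 2) * ((k:ℝ) + 3))) := by
  set ν := μ.restrict (Set.Ico δ 1) with hν
  haveI : IsFiniteMeasure ν := by
    constructor
    rw [hν, Measure.restrict_apply_univ]
    exact lt_of_le_of_lt (hb δ ⟨le_rfl, hδ1⟩) ENNReal.ofReal_lt_top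
  have f_nn : 0 ≤ᵐ[ν] (fun a : ℝ => a) := by
    filter_upwards [ae_restrict_mem measurableSet_Ico] with a ha
    exact le_trans hδ0 ha.1
  have f_mble : AEMeasurable (fun a : ℝ => a) ν := aemeasurable_id
  have ppos : (0:ℝ) < (k + 1 : ℕ) := by positivity
  have key := lintegral_rpow_eq_lintegral_meas_le_mul ν f_nn f_mble ppos
  -- rewrite LHS
  have hL : ∫⁻ t in Set.Ico δ 1, ENNReal.ofReal (t ^ (k + 1)) ∂μ
      = ∫⁻ a, ENNReal.ofReal (a ^ ((k + 1 : ℕ) : ℝ)) ∂ν := by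
    rw [hν]
    congr 1
    ext a
    rw [Real.rpow_natCast]
  rw [hL, key]
  -- bound the RHS integrand
  have hbound : ∫⁻ t in Ioi (0:ℝ), ν {a : ℝ | t ≤ a} * ENNReal.ofReal (t ^ (((k+1:ℕ):ℝ) - 1))
      ≤ ∫⁻ t in Ioi (0:ℝ),
          (Ioo (0:ℝ) 1).indicator (fun t => ENNReal.ofReal (ε * (1 - t) ^ 2 * t ^ k)) t := by
    apply lintegral_mono_ae
    filter_upwards [ae_restrict_mem measurableSet_Ioi] with t ht
    rcases lt_or_ge t 1 with ht1 | ht1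
    · have hmem : max δ t ∈ Set.Ico δ 1 := ⟨le_max_left _ _, max_lt hδ1 ht1⟩
      have h1 : ν {a : ℝ | t ≤ a} ≤ ENNReal.ofReal (ε * (1 - t) ^ 2) := by
        have hset : {a : ℝ | t ≤ a} = Set.Ici t := rfl
        have : ν {a : ℝ | t ≤ a} ≤ μ (Set.Ico (max δ t) 1) := by
          rw [hν, hset, Measure.restrict_apply measurableSet_Ici]
          apply measure_mono
          rintro x ⟨hx1, hx2, hx3⟩
          exact ⟨max_le hx2 hx1, hx3⟩
        refine this.trans ((hb _ hmem).trans ?_)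
        apply ENNReal.ofReal_le_ofReal
        apply mul_le_mul_of_nonneg_left _ hε
        have hmax : t ≤ max δ t := le_max_right δ t
        have h1m : (0:ℝ) ≤ 1 - max δ t := by linarith [hmem.2.le]
        apply pow_le_pow_left₀ h1m (by linarith)
      have h2 : ENNReal.ofReal (t ^ (((k+1:ℕ):ℝ) - 1)) = ENNReal.ofReal (t ^ k) := by
        congr 1
        have : (((k+1:ℕ):ℝ) - 1) = (k : ℝ) := by push_cast; ring
        rw [this, Real.rpow_natCast]
      rw [h2, Set.indicator_of_mem (Set.mem_Ioo.mpr ⟨ht, ht1⟩), ENNReal.ofReal_mul (by positivity)]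
      exact mul_le_mul' h1 le_rfl
    · have h0 : ν {a : ℝ | t ≤ a} = 0 := by
        rw [hν, Measure.restrict_apply' measurableSet_Ico]
        convert measure_empty (μ := μ)
        ext x
        simp only [Set.mem_inter_iff, Set.mem_Ico, Set.mem_empty_iff_false, iff_false,
          Set.mem_Ici]
        rintro ⟨hx1, _, hx3⟩
        have hx1' : t ≤ x := hx1
        linarith
      rw [h0, zero_mul]
      exact zero_le
  refine le_trans (mul_le_mul' le_rfl hbound) ?_
  rw [lintegral_indicator measurableSet_Ioo, Measure.restrict_restrict measurableSet_Ioo]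
  have hinter : Ioo (0:ℝ) 1 ∩ Ioi 0 = Ioo 0 1 := by
    ext x; simp only [mem_inter_iff, mem_Ioo, mem_Ioi, and_iff_left_iff_imp]
    exact fun h => h.1
  rw [hinter]
  -- convert to a real integral
  have hint : IntegrableOn (fun t : ℝ => ε * (1 - t) ^ 2 * t ^ k) (Ioo 0 1) := by
    apply IntegrableOn.mono_set _ Ioo_subset_Icc_self
    exact Continuous.integrableOn_Icc (by continuity)
  have hnn : 0 ≤ᵐ[volume.restrict (Ioo (0:ℝ) 1)] fun t : ℝ => ε * (1 - t) ^ 2 * t ^ k := by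
    filter_upwards [ae_restrict_mem measurableSet_Ioo] with t ht
    have := ht.1.le
    have := ht.2.le
    positivity
  rw [← ofReal_integral_eq_lintegral_ofReal hint hnn]
  rw [← ENNReal.ofReal_mul (by positivity)]
  apply ENNReal.ofReal_le_ofReal
  -- compute the integral
  have hval : ∫ t in Ioo (0:ℝ) 1, ε * (1 - t) ^ 2 * t ^ k
      = ε * (1 / ((k:ℝ)+1) - 2 / ((k:ℝ)+2) + 1 / ((k:ℝ)+3)) := by
    rw [← integral_Ioc_eq_integral_Ioo, ← intervalIntegral.integral_of_le zero_le_one]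
    have : ∀ t : ℝ, ε * (1 - t) ^ 2 * t ^ k = ε * t ^ k - 2 * ε * t ^ (k+1) + ε * t ^ (k+2) := by
      intro t; ring
    simp_rw [this]
    rw [intervalIntegral.integral_add ((intervalIntegral.intervalIntegrable_pow k).const_mul ε
          |>.sub ((intervalIntegral.intervalIntegrable_pow (k+1)).const_mul (2*ε)))
          ((intervalIntegral.intervalIntegrable_pow (k+2)).const_mul ε),
        intervalIntegral.integral_sub ((intervalIntegral.intervalIntegrable_pow k).const_mul ε)
          ((intervalIntegral.intervalIntegrable_pow (k+1)).const_mul (2*ε))]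
    simp_rw [intervalIntegral.integral_const_mul, integral_pow]
    push_cast
    have h1 : (k:ℝ) + 1 ≠ 0 := by positivity
    have h2 : (k:ℝ) + 1 + 1 ≠ 0 := by positivity
    have h3 : (k:ℝ) + 2 + 1 ≠ 0 := by positivity
    field_simp
    ring
  rw [hval]
  have h1 : (0:ℝ) < (k:ℝ) + 1 := by positivity
  have h2 : (0:ℝ) < (k:ℝ) + 2 := by positivity
  have h3 : (0:ℝ) < (k:ℝ) + 3 := by positivity
  apply le_of_eq
  push_cast
  field_simp
  ring

lemma aux_tendsto (c C : ℝ) {δ : ℝ} (h0 : 0 ≤ δ) (h1 : δ < 1) :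
    Filter.Tendsto (fun k : ℕ => ((k:ℝ) + c) ^ 2 * δ ^ k * C) Filter.atTop (nhds 0) := by
  have h2 := tendsto_pow_const_mul_const_pow_of_lt_one 2 h0 h1
  have hh1 := tendsto_pow_const_mul_const_pow_of_lt_one 1 h0 h1
  have hh0 := tendsto_pow_const_mul_const_pow_of_lt_one 0 h0 h1
  have := ((h2.add ((hh1.const_mul (2*c)).add (hh0.const_mul (c^2)))).mul_const C)
  simp only [add_zero, zero_mul, zero_add, mul_zero] at this
  convert this using 2 with k
  ring

theorem stmt17 (μ : Measure ℝ) (hμ : IsVanishingCarleson 2 μ) :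
    Filter.Tendsto (fun m : ℕ => ((m : ℝ) + 1) ^ 2 * moment μ m)
      Filter.atTop (nhds 0) := by
  classical
  obtain ⟨δ₀, hδ₀, hb₀⟩ := hμ 1 one_pos
  have moment_eq : ∀ m : ℕ,
      moment μ m = (∫⁻ t in Set.Ico (0:ℝ) 1, ENNReal.ofReal (t ^ m) ∂μ).toReal := by
    intro m
    rw [moment, integral_eq_lintegral_of_nonneg_ae]
    · filter_upwards [ae_restrict_mem measurableSet_Ico] with t ht using pow_nonneg ht.1 m
    · exact (continuous_pow m).aestronglyMeasurable
  by_cases hP : ∃ m₀ : ℕ, ∫⁻ t in Set.Ico (0:ℝ) δ₀, ENNReal.ofReal (t ^ m₀) ∂μ < ⊤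
  swap
  · push_neg at hP
    have hz : ∀ m : ℕ, moment μ m = 0 := by
      intro m
      rw [moment_eq m]
      have htop : ∫⁻ t in Set.Ico (0:ℝ) 1, ENNReal.ofReal (t ^ m) ∂μ = ⊤ := by
        apply top_unique
        refine le_trans ?_ (lintegral_mono_set (Set.Ico_subset_Ico le_rfl hδ₀.2.le))
        exact (hP m)
      simp [htop]
    simp only [hz, mul_zero]
    exact tendsto_const_nhds
  obtain ⟨m₀, hK⟩ := hP
  rw [NormedAddCommGroup.tendsto_nhds_zero]
  intro ε hε
  obtain ⟨δ₁, hδ₁, hb₁⟩ := hμ (ε/8) (by positivity)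
  set δ : ℝ := max δ₀ δ₁ with hδdef
  have hδ0 : 0 ≤ δ := le_trans hδ₀.1 (le_max_left _ _)
  have hδ1 : δ < 1 := max_lt hδ₀.2 hδ₁.2
  have hb : ∀ t ∈ Set.Ico δ 1, μ (Set.Ico t 1) ≤ ENNReal.ofReal ((ε/8) * (1 - t)^2) := by
    intro t ht
    have h2 : ((1:ℝ) - t) ^ (2:ℝ) = (1 - t)^(2:ℕ) := by
      rw [show (2:ℝ) = ((2:ℕ):ℝ) by norm_num, Real.rpow_natCast]
    have := hb₁ t ⟨le_trans (le_max_right δ₀ δ₁) ht.1, ht.2⟩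
    rwa [h2] at this
  set K' : ENNReal := ∫⁻ t in Set.Ico (0:ℝ) δ, ENNReal.ofReal (t ^ m₀) ∂μ with hK'def
  have hδ₀δ : δ₀ ≤ δ := le_max_left _ _
  have hK' : K' ≠ ⊤ := by
    have hsplit : Set.Ico (0:ℝ) δ = Set.Ico 0 δ₀ ∪ Set.Ico δ₀ δ :=
      (Set.Ico_union_Ico_eq_Ico hδ₀.1 hδ₀δ).symm
    rw [hK'def, hsplit, lintegral_union measurableSet_Ico (Set.Ico_disjoint_Ico_same)]
    refine ENNReal.add_ne_top.mpr ⟨hK.ne, ?_⟩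
    have h1 : ∫⁻ t in Set.Ico δ₀ δ, ENNReal.ofReal (t ^ m₀) ∂μ ≤ μ (Set.Ico δ₀ δ) := by
      calc ∫⁻ t in Set.Ico δ₀ δ, ENNReal.ofReal (t ^ m₀) ∂μ
          ≤ ∫⁻ _ in Set.Ico δ₀ δ, 1 ∂μ := by
            apply lintegral_mono_ae
            filter_upwards [ae_restrict_mem measurableSet_Ico] with t ht
            have ht0 : 0 ≤ t := le_trans hδ₀.1 ht.1
            have ht1 : t ≤ 1 := le_trans ht.2.le hδ1.le
            refine le_trans (ENNReal.ofReal_le_ofReal (pow_le_one₀ ht0 ht1)) (by simp)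
        _ = μ (Set.Ico δ₀ δ) := setLIntegral_one _
    have h2 : μ (Set.Ico δ₀ δ) ≤ ENNReal.ofReal (1 * (1 - δ₀) ^ (2:ℝ)) :=
      le_trans (measure_mono (Set.Ico_subset_Ico le_rfl hδ1.le)) (hb₀ δ₀ ⟨le_rfl, hδ₀.2⟩)
    exact (lt_of_le_of_lt (le_trans h1 h2) ENNReal.ofReal_lt_top).ne
  set C : ℝ := K'.toReal with hCdef
  have haux := aux_tendsto ((m₀:ℝ) + 1) C hδ0 hδ1
  obtain ⟨N, hN⟩ := Metric.tendsto_atTop.mp haux (ε/4) (by positivity)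
  filter_upwards [Filter.eventually_ge_atTop (m₀ + 1 + N)] with m hm
  set k := m - m₀ with hkdef
  have hm₀m : m₀ ≤ m := by omega
  have hkN : N ≤ k := by omega
  have hm1 : 1 ≤ m := by omega
  obtain ⟨j, hj⟩ : ∃ j, m = j + 1 := ⟨m - 1, by omega⟩
  set A := ∫⁻ t in Set.Ico (0:ℝ) δ, ENNReal.ofReal (t ^ m) ∂μ with hAdef
  set B := ∫⁻ t in Set.Ico δ 1, ENNReal.ofReal (t ^ m) ∂μ with hBdef
  have hA : A ≤ ENNReal.ofReal (δ ^ k) * K' := by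
    rw [hAdef, hK'def, ← lintegral_const_mul' _ _ ENNReal.ofReal_ne_top]
    apply lintegral_mono_ae
    filter_upwards [ae_restrict_mem measurableSet_Ico] with t ht
    rw [← ENNReal.ofReal_mul (by positivity)]
    apply ENNReal.ofReal_le_ofReal
    have hpow : t ^ m = t ^ k * t ^ m₀ := by
      rw [← pow_add]; congr 1; omega
    rw [hpow]
    exact mul_le_mul_of_nonneg_right (pow_le_pow_left₀ ht.1 ht.2.le k) (pow_nonneg ht.1 m₀)
  have hB : B ≤ ENNReal.ofReal (2 * (ε/8) / (((j:ℝ) + 2) * ((j:ℝ) + 3))) := by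
    rw [hBdef, hj]
    exact tail_bound μ (by positivity) hδ0 hδ1 hb j
  have hsplit : ∫⁻ t in Set.Ico (0:ℝ) 1, ENNReal.ofReal (t ^ m) ∂μ = A + B := by
    rw [hAdef, hBdef, ← lintegral_union measurableSet_Ico (Set.Ico_disjoint_Ico_same),
      Set.Ico_union_Ico_eq_Ico hδ0 hδ1.le]
  have hmom_le : moment μ m ≤ A.toReal + B.toReal := by
    rw [moment_eq m, hsplit]
    exact ENNReal.toReal_add_le
  have hmom_nn : 0 ≤ moment μ m := by
    rw [moment_eq m]; exact ENNReal.toReal_nonneg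
  have hAr : A.toReal ≤ δ ^ k * C := by
    have := ENNReal.toReal_mono (ENNReal.mul_ne_top ENNReal.ofReal_ne_top hK') hA
    rwa [ENNReal.toReal_mul, ENNReal.toReal_ofReal (by positivity)] at this
  have hBr : B.toReal ≤ 2 * (ε/8) / (((j:ℝ) + 2) * ((j:ℝ) + 3)) := by
    have := ENNReal.toReal_mono ENNReal.ofReal_ne_top hB
    rwa [ENNReal.toReal_ofReal (by positivity)] at this
  -- now pure real arithmetic
  set M : ℝ := (m : ℝ) with hMdef
  have hMk : M + 1 = (k:ℝ) + ((m₀:ℝ) + 1) := by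
    rw [hMdef, hkdef]
    push_cast [Nat.cast_sub hm₀m]
    ring
  have hjM : (j:ℝ) = M - 1 := by
    rw [hMdef, hj]; push_cast; ring
  have hM1 : (0:ℝ) < M + 1 := by positivity
  have hM2 : (0:ℝ) < M + 2 := by positivity
  have hknn : (0:ℝ) ≤ δ ^ k := by positivity
  have hCnn : (0:ℝ) ≤ C := ENNReal.toReal_nonneg
  have hhk := hN k hkN
  rw [Real.dist_eq, sub_zero] at hhk
  have hhk' : ((k:ℝ) + ((m₀:ℝ)+1))^2 * δ ^ k * C < ε/4 :=
    lt_of_abs_lt hhk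
  have e1 : (M+1)^2 * moment μ m ≤ (M+1)^2 * (A.toReal + B.toReal) :=
    mul_le_mul_of_nonneg_left hmom_le (by positivity)
  have e3 : (M+1)^2 * A.toReal ≤ (M+1)^2 * (δ ^ k * C) :=
    mul_le_mul_of_nonneg_left hAr (by positivity)
  have e3' : (M+1)^2 * (δ ^ k * C) < ε/4 := by
    rw [hMk]
    calc ((k:ℝ) + ((m₀:ℝ)+1))^2 * (δ^k * C) = ((k:ℝ) + ((m₀:ℝ)+1))^2 * δ^k * C := by ring
      _ < ε/4 := hhk'
  have e4 : (M+1)^2 * B.toReal ≤ (M+1)^2 * ((ε/4) / ((M+1)*(M+2))) := by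
    apply mul_le_mul_of_nonneg_left _ (by positivity)
    calc B.toReal ≤ 2 * (ε/8) / (((j:ℝ) + 2) * ((j:ℝ) + 3)) := hBr
      _ = (ε/4) / ((M+1)*(M+2)) := by rw [hjM]; ring_nf
  have e5 : (M+1)^2 * ((ε/4) / ((M+1)*(M+2))) ≤ ε/4 := by
    have heq : (M+1)^2 * ((ε/4) / ((M+1)*(M+2))) = (ε/4) * ((M+1)/(M+2)) := by
      field_simp
    rw [heq]
    have hle : (M+1)/(M+2) ≤ 1 := (div_le_one hM2).mpr (by linarith)
    calc (ε/4) * ((M+1)/(M+2)) ≤ (ε/4) * 1 :=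
          mul_le_mul_of_nonneg_left hle (by positivity)
      _ = ε/4 := mul_one _
  have habs : |(M+1)^2 * moment μ m| = (M+1)^2 * moment μ m :=
    abs_of_nonneg (mul_nonneg (by positivity) hmom_nn)
  show ‖(M + 1) ^ 2 * moment μ m‖ < ε
  rw [Real.norm_eq_abs, habs]
  linarith
end
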